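/- arXiv:2002.01307 — 9 statements merged into one kernel-verified Lean document; each statement's English description precedes it below -/
import Mathlib

section
/- Let n, m, Δ ≥ 1 be integers satisfying n ≤ m + (1/2)·m·log₂(e·n/m) + log₂(Δ). Then n ≤ c·m + log₂(Δ) + (m/2)·log₂(log₂√(2e) + log₂(Δ)/m), where c = log₂√(2e²/(e − log₂ e)) + 1/2 ≤ 2.27. -/
set_option maxHeartbeats 1000000


/-- If positive integers `n, m, Δ` satisfy
`n ≤ m + (1/2)·m·log₂(e·n/m) + log₂ Δ`, then
`n ≤ c·m + log₂ Δ + (m/2)·log₂(log₂ √(2e) + log₂ Δ / m)` where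
`c = log₂ √(2e²/(e − log₂ e)) + 1/2 ≤ 2.27`. -/
theorem stmt0 (n m Δ : ℕ) (hn : 1 ≤ n) (hm : 1 ≤ m) (hΔ : 1 ≤ Δ)
    (h : (n : ℝ) ≤ (m : ℝ) + (1 / 2) * (m : ℝ) *
        Real.logb 2 (Real.exp 1 * (n : ℝ) / (m : ℝ)) + Real.logb 2 (Δ : ℝ)) :
    (Real.logb 2 (Real.sqrt (2 * Real.exp 1 ^ 2 /
        (Real.exp 1 - Real.logb 2 (Real.exp 1)))) + 1 / 2 ≤ 2.27) ∧
    (n : ℝ) ≤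
      (Real.logb 2 (Real.sqrt (2 * Real.exp 1 ^ 2 /
          (Real.exp 1 - Real.logb 2 (Real.exp 1)))) + 1 / 2) * (m : ℝ)
        + Real.logb 2 (Δ : ℝ)
        + ((m : ℝ) / 2) *
            Real.logb 2 (Real.logb 2 (Real.sqrt (2 * Real.exp 1))
              + Real.logb 2 (Δ : ℝ) / (m : ℝ)) := by
  set E := Real.exp 1 with hEdef
  have hE0 : (0:ℝ) < E := Real.exp_pos 1
  have hlg : (0:ℝ) < Real.log 2 := Real.log_pos one_lt_two
  set l' := Real.logb 2 E with hl'def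
  have hl : l' = 1 / Real.log 2 := by
    rw [hl'def, hEdef, Real.logb, Real.log_exp]
  have hE1 : (2.7182818283:ℝ) < E := Real.exp_one_gt_d9
  have hE2 : E < 2.7182818286 := Real.exp_one_lt_d9
  have hlg1 : (0.6931471803:ℝ) < Real.log 2 := Real.log_two_gt_d9
  have hlg2 : Real.log 2 < 0.6931471808 := Real.log_two_lt_d9
  have hl1 : (1.442695:ℝ) ≤ l' := by
    rw [hl, le_div_iff₀ hlg]; nlinarith
  have hl2 : l' ≤ 1.4426951 := by
    rw [hl, div_le_iff₀ hlg]; nlinarith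
  have hElpos : (0:ℝ) < E - l' := by nlinarith
  have hEl1 : (1.2755867:ℝ) ≤ E - l' := by nlinarith
  -- the constant Y = 2E²/(E-l')
  set Y : ℝ := 2 * E ^ 2 / (E - l') with hYdef
  have hy0 : (0:ℝ) < Y := div_pos (by positivity) hElpos
  have hyb : Y ≤ 11.5854 := by
    rw [hYdef, div_le_iff₀ hElpos]; nlinarith [sq_nonneg (E - 2.7182818286)]
  have hpow : Y ^ 50 ≤ 2 ^ 177 := by
    calc Y ^ 50 ≤ (11.5854:ℝ) ^ 50 := pow_le_pow_left₀ hy0.le hyb 50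
      _ ≤ 2 ^ 177 := by norm_num
  have hYlog : Real.logb 2 Y ≤ 3.54 := by
    have h50 : Real.logb 2 (Y ^ 50) ≤ Real.logb 2 ((2:ℝ) ^ 177) :=
      (Real.logb_le_logb one_lt_two (pow_pos hy0 50) (by positivity)).mpr hpow
    rw [Real.logb_pow, Real.logb_pow, Real.logb_self_eq_one one_lt_two] at h50
    push_cast at h50
    linarith
  have hsq : Real.logb 2 (Real.sqrt Y) = Real.logb 2 Y / 2 := by
    rw [Real.logb, Real.logb, Real.log_sqrt hy0.le]; ring
  have hc : Real.logb 2 (Real.sqrt Y) + 1 / 2 ≤ 2.27 := by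
    rw [hsq]; linarith
  clear hpow hyb
  refine ⟨hc, ?_⟩
  -- main part
  have hm0 : (0:ℝ) < m := by exact_mod_cast hm
  have hn0 : (0:ℝ) < n := by exact_mod_cast hn
  have hΔ1 : (1:ℝ) ≤ Δ := by exact_mod_cast hΔ
  set x : ℝ := (n:ℝ) / m with hxdef
  have hx0 : 0 < x := by positivity
  have hL0 : (0:ℝ) ≤ Real.logb 2 (Δ:ℝ) / m :=
    div_nonneg (Real.logb_nonneg one_lt_two hΔ1) hm0.le
  set L : ℝ := Real.logb 2 (Δ:ℝ) / m with hLdef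
  set A : ℝ := (1 + l') / 2 + L with hAdef
  have hA1 : (1.221:ℝ) ≤ A := by rw [hAdef]; linarith
  have hA0 : (0:ℝ) < A := lt_of_lt_of_le (by norm_num) hA1
  clear_value E l' Y x L A
  have hs2e : Real.logb 2 (Real.sqrt (2 * E)) = (1 + l') / 2 := by
    rw [Real.logb, Real.log_sqrt (by linarith),
      Real.log_mul two_ne_zero (ne_of_gt hE0), hEdef, Real.log_exp, hl]
    field_simp
  have hmul : Real.logb 2 (E * (n:ℝ) / m) = l' + Real.logb 2 x := by
    rw [mul_div_assoc, ← hxdef, Real.logb_mul (ne_of_gt hE0) (ne_of_gt hx0), hl'def]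
  have h1 : x ≤ 1/2 + A + (1/2) * Real.logb 2 x := by
    rw [hxdef, div_le_iff₀ hm0]
    rw [hmul, hxdef] at h
    have expand : (1/2 + A + (1/2) * Real.logb 2 ((n:ℝ)/m)) * m
        = m + 1/2 * m * (l' + Real.logb 2 ((n:ℝ)/m)) + Real.logb 2 (Δ:ℝ) := by
      rw [hAdef, hLdef]; field_simp [hm0.ne']; ring
    rw [expand]; exact h
  have hlogx2 : Real.logb 2 x * E ≤ x * l' := by
    have h0 : Real.log x ≤ x / E := by
      have h3 := Real.log_le_sub_one_of_pos (div_pos hx0 hE0)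
      have hlogE : Real.log E = 1 := by rw [hEdef]; exact Real.log_exp 1
      rw [Real.log_div (ne_of_gt hx0) (ne_of_gt hE0), hlogE] at h3
      linarith
    have h0' : Real.log x * E ≤ x := by
      have := mul_le_mul_of_nonneg_right h0 hE0.le
      rwa [div_mul_cancel₀ _ (ne_of_gt hE0)] at this
    have e1 : Real.logb 2 x * E = (Real.log x * E) / Real.log 2 := by
      rw [Real.logb]; ring
    have e2 : x * l' = x / Real.log 2 := by rw [hl]; ring
    rw [e1, e2]
    gcongr
  have h2El : (0:ℝ) < 2 * E - l' := by linarith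
  have hAl : E - l' ≤ A * l' := by
    linarith [mul_le_mul hA1 hl1 (by norm_num) (by linarith : (0:ℝ) ≤ A)]
  have h2a : x * (2*E - l') ≤ (1 + 2*A) * E := by
    nlinarith [mul_le_mul_of_nonneg_right h1 hE0.le, hlogx2]

  have h2 : x * (E - l') ≤ A * E := by
    nlinarith [mul_le_mul_of_nonneg_right h2a hElpos.le,
      mul_le_mul_of_nonneg_left hAl hE0.le, h2El]
  have h3 : Real.logb 2 x ≤ Real.logb 2 (A * E / (E - l')) := by
    apply (Real.logb_le_logb one_lt_two hx0 (div_pos (mul_pos hA0 hE0) hElpos)).mpr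
    rw [le_div_iff₀ hElpos]
    nlinarith [h2]
  have hkey : Real.logb 2 (A * E / (E - l')) =
      Real.logb 2 A + Real.logb 2 Y - 1 - l' := by
    rw [hYdef, Real.logb_div (ne_of_gt (mul_pos hA0 hE0)) (ne_of_gt hElpos),
      Real.logb_div (by positivity) (ne_of_gt hElpos),
      Real.logb_mul (ne_of_gt hA0) (ne_of_gt hE0),
      Real.logb_mul (two_ne_zero) (pow_ne_zero 2 (ne_of_gt hE0)),
      Real.logb_self_eq_one one_lt_two, ← hl'def]
    have : Real.logb 2 (E ^ 2) = 2 * l' := by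
      rw [Real.logb_pow, hl'def]; push_cast; ring
    rw [this]; ring
  have hfin : x ≤ 1/2 + A + (1/2) * (Real.logb 2 A + Real.logb 2 Y - 1 - l') := by
    rw [← hkey]; linarith
  -- conclude
  rw [hs2e, ← hAdef]
  have hfin' : (n:ℝ) ≤ (1/2 + A + (1/2) * (Real.logb 2 A + Real.logb 2 Y - 1 - l')) * m := by
    rw [← div_le_iff₀ hm0, ← hxdef]; exact hfin
  rw [hsq]
  refine le_trans hfin' (le_of_eq ?_)
  rw [hAdef, hLdef]
  field_simp [hm0.ne']
  ring
end

section
/- Let A ∈ ℤ^{n×n} be nonsingular with Δ = |det(A)| > 0, let p ∈ ℚⁿ and γ > 0. Then the number of integer points in the set P = ℤⁿ ∩ {A x : ‖x − p‖_∞ ≤ γ} is at most (2γ + 1)ⁿ · Δ. -/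
private lemma aux_index {n : ℕ} (A : Matrix (Fin n) (Fin n) ℤ) (hA : A.det ≠ 0) :
    (LinearMap.range (Matrix.toLin' A)).toAddSubgroup.index = A.det.natAbs := by
  classical
  set N := LinearMap.range (Matrix.toLin' A) with hN
  have hinj : Function.Injective (Matrix.toLin' A) := by
    intro v w h
    by_contra hvw
    refine hA (Matrix.exists_mulVec_eq_zero_iff.mp ⟨v - w, sub_ne_zero.mpr hvw, ?_⟩)
    have h' : A.mulVec v = A.mulVec w := by simpa [Matrix.toLin'_apply] using h
    rw [Matrix.mulVec_sub, h', sub_self]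
  let e : (Fin n → ℤ) ≃ₗ[ℤ] N := LinearEquiv.ofInjective _ hinj
  have hne : N.toAddSubgroup.index ≠ 0 :=
    Int.submodule_toAddSubgroup_index_ne_zero_iff.mpr ⟨e.symm⟩
  obtain ⟨m, snf⟩ := N.smithNormalForm (Pi.basisFun ℤ (Fin n))
  have hm : m = n := by simpa using snf.toAddSubgroup_index_ne_zero_iff.mp hne
  subst hm
  have hidx : N.toAddSubgroup.index = ∏ i, (snf.a i).natAbs := by
    rw [snf.toAddSubgroup_index_eq_ite]
    simp [Int.index_zmultiples]
  have hg : Function.Bijective snf.f := Finite.injective_iff_bijective.mp snf.f.injective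
  let g : Fin m ≃ Fin m := Equiv.ofBijective snf.f hg
  let c : Module.Basis (Fin m) ℤ (Fin m → ℤ) := snf.bM.reindex g.symm
  have hc : ∀ i, c i = snf.bM (snf.f i) := fun i => by
    simp only [c, Module.Basis.reindex_apply, Equiv.symm_symm]
    rfl
  let e' : (Fin m → ℤ) ≃ₗ[ℤ] N := c.equiv snf.bN (Equiv.refl _)
  have hassoc : Associated (LinearMap.det (N.subtype ∘ₗ (e : (Fin m → ℤ) →ₗ[ℤ] N)))
      (LinearMap.det (N.subtype ∘ₗ (e' : (Fin m → ℤ) →ₗ[ℤ] N))) :=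
    LinearMap.associated_det_comp_equiv _ _ _
  have h1 : N.subtype ∘ₗ (e : (Fin m → ℤ) →ₗ[ℤ] N) = Matrix.toLin' A :=
    LinearMap.ext fun v => rfl
  have hfc : ∀ i, (N.subtype ∘ₗ (e' : (Fin m → ℤ) →ₗ[ℤ] N)) (c i) = snf.a i • c i := by
    intro i
    simp only [LinearMap.comp_apply, LinearEquiv.coe_coe, e', Module.Basis.equiv_apply,
      Equiv.refl_apply, Submodule.coe_subtype]
    rw [snf.snf i, hc]
  have h2 : LinearMap.det (N.subtype ∘ₗ (e' : (Fin m → ℤ) →ₗ[ℤ] N)) = ∏ i, snf.a i := by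
    rw [← LinearMap.det_toMatrix c]
    have hmat : LinearMap.toMatrix c c (N.subtype ∘ₗ (e' : (Fin m → ℤ) →ₗ[ℤ] N))
        = Matrix.diagonal snf.a := by
      ext i j
      rw [LinearMap.toMatrix_apply, hfc, map_smul, Module.Basis.repr_self]
      by_cases h : i = j
      · subst h; simp
      · simp [Matrix.diagonal_apply_ne _ h, Finsupp.single_eq_of_ne h]
    rw [hmat, Matrix.det_diagonal]
  have hdet : A.det.natAbs = (∏ i, snf.a i).natAbs := by
    rw [← LinearMap.det_toLin' A, ← h1, ← h2]
    exact Int.natAbs_eq_iff_associated.mpr hassoc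
  rw [hidx, hdet]
  exact (map_prod Int.natAbsHom (fun i => snf.a i) Finset.univ).symm

/-- For a nonsingular integer matrix `A` with `Δ = |det A| > 0`,
`p ∈ ℚⁿ` and `γ > 0`, the number of integer points in
`P = ℤⁿ ∩ {A x : ‖x − p‖_∞ ≤ γ}` is at most `(2γ + 1)ⁿ · Δ`. -/
theorem stmt2 (n : ℕ) (A : Matrix (Fin n) (Fin n) ℤ) (hA : A.det ≠ 0)
    (p : Fin n → ℚ) (γ : ℝ) (hγ : 0 < γ)
    (P : Set (Fin n → ℤ))
    (hP : P = {y : Fin n → ℤ | ∃ x : Fin n → ℝ,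
        (∀ i, |x i - (p i : ℝ)| ≤ γ) ∧
        (∀ i, (y i : ℝ) = ∑ j, (A i j : ℝ) * x j)}) :
    P.Finite ∧ (Nat.card P : ℝ) ≤ (2 * γ + 1) ^ n * |(A.det : ℝ)| := by
  classical
  set N := LinearMap.range (Matrix.toLin' A) with hN
  set Δ := A.det.natAbs with hΔ
  have hΔpos : 0 < Δ := Int.natAbs_pos.mpr hA
  set M : ℤ := ⌊2 * γ⌋ with hMdef
  have hM0 : 0 ≤ M := Int.floor_nonneg.mpr (by linarith)
  -- real injectivity
  have hinjR : ∀ x x' : Fin n → ℝ,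
      (∀ i, ∑ j, (A i j : ℝ) * x j = ∑ j, (A i j : ℝ) * x' j) → x = x' := by
    intro x x' h
    set B : Matrix (Fin n) (Fin n) ℝ := (Int.castRingHom ℝ).mapMatrix A with hB
    have hBdet : B.det ≠ 0 := by
      rw [hB, ← RingHom.map_det]
      exact Int.cast_ne_zero.mpr hA
    have hBinj : Function.Injective B.mulVec := by
      intro v w hvw
      by_contra hne
      refine hBdet (Matrix.exists_mulVec_eq_zero_iff.mp ⟨v - w, sub_ne_zero.mpr hne, ?_⟩)
      rw [Matrix.mulVec_sub, hvw, sub_self]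
    have hBx : B.mulVec x = B.mulVec x' := by
      funext i
      simpa [Matrix.mulVec, dotProduct, B] using h i
    exact hBinj hBx
  have hP' : ∀ z : Fin n → ℤ, z ∈ P ↔ (∃ x : Fin n → ℝ, (∀ i, |x i - (p i : ℝ)| ≤ γ) ∧
      (∀ i, (z i : ℝ) = ∑ j, (A i j : ℝ) * x j)) := fun z => by rw [hP]; exact Iff.rfl
  have hmem : ∀ y : ↥P, ∃ x : Fin n → ℝ, (∀ i, |x i - (p i : ℝ)| ≤ γ) ∧
      (∀ i, ((y : Fin n → ℤ) i : ℝ) = ∑ j, (A i j : ℝ) * x j) :=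
    fun y => (hP' y.1).mp y.2
  set X : ↥P → (Fin n → ℝ) := fun y => (hmem y).choose with hXdef
  have hX1 : ∀ (y : ↥P) (i : Fin n), |X y i - (p i : ℝ)| ≤ γ := fun y => (hmem y).choose_spec.1
  have hX2 : ∀ (y : ↥P) (i : Fin n), ((y : Fin n → ℤ) i : ℝ) = ∑ j, (A i j : ℝ) * X y j :=
    fun y => (hmem y).choose_spec.2
  -- the target
  let T := ((Fin n → ℤ) ⧸ N.toAddSubgroup) × (Fin n → {k : ℤ // k ∈ Finset.Icc 0 M})
  have hmemIcc : ∀ (y : ↥P) (i : Fin n), ⌊X y i - (p i : ℝ) + γ⌋ ∈ Finset.Icc 0 M := by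
    intro y i
    have h := abs_le.mp (hX1 y i)
    rw [Finset.mem_Icc]
    exact ⟨Int.floor_nonneg.mpr (by linarith), Int.floor_le_floor (by linarith)⟩
  let f : ↥P → T := fun y =>
    (QuotientAddGroup.mk ((y : Fin n → ℤ)), fun i => ⟨⌊X y i - (p i : ℝ) + γ⌋, hmemIcc y i⟩)
  have hfinj : Function.Injective f := by
    intro y y' h
    obtain ⟨h1, h2⟩ := Prod.ext_iff.mp h
    have h1' : -(y : Fin n → ℤ) + (y' : Fin n → ℤ) ∈ N := (QuotientAddGroup.eq).mp h1
    obtain ⟨m, hm⟩ := h1'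
    rw [Matrix.toLin'_apply] at hm
    -- real relation
    have hXrel : X y' = fun j => X y j + (m j : ℝ) := by
      refine (hinjR _ _ ?_).symm
      intro i
      have hcast : ((A.mulVec m) i : ℝ) = ∑ j, (A i j : ℝ) * (m j : ℝ) := by
        simp [Matrix.mulVec, dotProduct]
      have hmi : ((A.mulVec m) i : ℝ) = -((y : Fin n → ℤ) i : ℝ) + ((y' : Fin n → ℤ) i : ℝ) := by
        rw [hm]; simp
      calc ∑ j, (A i j : ℝ) * (X y j + (m j : ℝ))
          = (∑ j, (A i j : ℝ) * X y j) + ∑ j, (A i j : ℝ) * (m j : ℝ) := by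
            rw [← Finset.sum_add_distrib]; congr 1; funext j; ring
        _ = ((y : Fin n → ℤ) i : ℝ) + (-((y : Fin n → ℤ) i : ℝ) + ((y' : Fin n → ℤ) i : ℝ)) := by
            rw [← hX2 y i, ← hcast, hmi]
        _ = ((y' : Fin n → ℤ) i : ℝ) := by ring
        _ = ∑ j, (A i j : ℝ) * X y' j := hX2 y' i
    have hm0 : m = 0 := by
      funext i
      show m i = 0
      have h2i := congrArg (fun g => (g i : ℤ)) h2
      have : ⌊X y i - (p i : ℝ) + γ⌋ = ⌊X y' i - (p i : ℝ) + γ⌋ := by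
        exact congrArg Subtype.val (congrFun h2 i)
      rw [hXrel] at this
      simp only at this
      rw [show X y i + (m i : ℝ) - (p i : ℝ) + γ = X y i - (p i : ℝ) + γ + (m i : ℝ) by ring,
        Int.floor_add_intCast] at this
      omega
    apply Subtype.ext
    have : -(y : Fin n → ℤ) + (y' : Fin n → ℤ) = 0 := by
      rw [← hm, hm0, Matrix.mulVec_zero]
    exact (neg_add_eq_zero.mp this)
  -- finiteness of T
  have hidx := aux_index A hA
  have hcardQ : Nat.card ((Fin n → ℤ) ⧸ N.toAddSubgroup) = Δ := by
    rw [hΔ, ← hidx]; rfl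
  haveI : Finite ((Fin n → ℤ) ⧸ N.toAddSubgroup) :=
    Nat.finite_of_card_ne_zero (by rw [hcardQ]; exact hΔpos.ne')
  haveI : Finite T := by infer_instance
  have hPfin : P.Finite := Set.finite_coe_iff.mp (Finite.of_injective f hfinj)
  refine ⟨hPfin, ?_⟩
  have hcardIcc : Nat.card {k : ℤ // k ∈ Finset.Icc 0 M} = (M + 1).toNat := by
    rw [Nat.card_eq_fintype_card, Fintype.card_coe, Int.card_Icc]
    simp
  have hcardT : Nat.card T = Δ * (M + 1).toNat ^ n := by
    rw [Nat.card_prod, hcardQ, Nat.card_fun, hcardIcc, Nat.card_eq_fintype_card, Fintype.card_fin]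
  have hle : Nat.card ↥P ≤ Nat.card T := Nat.card_le_card_of_injective f hfinj
  rw [hcardT] at hle
  have hle' : (Nat.card ↥P : ℝ) ≤ (Δ : ℝ) * ((M + 1).toNat : ℝ) ^ n := by
    exact_mod_cast hle
  have hMreal : ((M + 1).toNat : ℝ) ≤ 2 * γ + 1 := by
    have h1 : (((M + 1).toNat : ℤ) : ℝ) = ((M + 1 : ℤ) : ℝ) := by
      rw [Int.toNat_of_nonneg (by omega)]
    have h2 : (M : ℝ) ≤ 2 * γ := by
      rw [hMdef]; exact Int.floor_le (2 * γ)
    push_cast at h1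
    rw [h1]
    linarith
  have habs : (Δ : ℝ) = |(A.det : ℝ)| := by
    rw [hΔ, Nat.cast_natAbs, Int.cast_abs]
  calc (Nat.card ↥P : ℝ) ≤ (Δ : ℝ) * ((M + 1).toNat : ℝ) ^ n := hle'
    _ ≤ (Δ : ℝ) * (2 * γ + 1) ^ n := by
        apply mul_le_mul_of_nonneg_left _ (Nat.cast_nonneg _)
        exact pow_le_pow_left₀ (Nat.cast_nonneg _) hMreal n
    _ = (2 * γ + 1) ^ n * |(A.det : ℝ)| := by rw [habs]; ring
end

section
/- Let A ∈ ℤ^{n×m} and B ∈ ℤ^{n×(n−m)} with rank(A) = m, rank(B) = n − m, and AᵀB = 0. Then for any subset 𝔅 ⊆ {1,…,n} with |𝔅| = m and complement 𝔑 = {1,…,n} ∖ 𝔅, one has Δ_gcd(B) · |det(A_{𝔅*})| = Δ_gcd(A) · |det(B_{𝔑*})|, where A_{𝔅*} is the m×m submatrix of A consisting of the rows indexed by 𝔅, and B_{𝔑*} is the (n−m)×(n−m) submatrix of B consisting of the rows indexed by 𝔑. -/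
open Matrix

section Aux

lemma sum_split {n m k p q : ℕ} (σ : Fin m ⊕ Fin k ≃ Fin n)
    (X : Matrix (Fin n) (Fin p) ℤ) (Y : Matrix (Fin n) (Fin q) ℤ) :
    (X.submatrix (σ ∘ Sum.inl) id)ᵀ * (Y.submatrix (σ ∘ Sum.inl) id)
      + (X.submatrix (σ ∘ Sum.inr) id)ᵀ * (Y.submatrix (σ ∘ Sum.inr) id) = Xᵀ * Y := by
  ext i j
  simp only [Matrix.add_apply, Matrix.mul_apply, Matrix.transpose_apply, Matrix.submatrix_apply,
    id, Function.comp]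
  rw [← Equiv.sum_comp σ (fun x => X x i * Y x j), Fintype.sum_sum_type]

lemma key {n m k : ℕ} (A : Matrix (Fin n) (Fin m) ℤ) (B : Matrix (Fin n) (Fin k) ℤ)
    (hAB : Aᵀ * B = 0) (σ : Fin m ⊕ Fin k ≃ Fin n) :
    (A.submatrix (σ ∘ Sum.inl) id).det * ((fromCols A B).submatrix σ id).det
      = (Aᵀ * A).det * (B.submatrix (σ ∘ Sum.inr) id).det := by
  set b := σ ∘ Sum.inl with hb
  set c := σ ∘ Sum.inr with hc
  set L : Matrix (Fin m ⊕ Fin k) (Fin m ⊕ Fin k) ℤ :=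
    fromBlocks (A.submatrix b id)ᵀ (A.submatrix c id)ᵀ 0 1 with hL
  have hC : (fromCols A B).submatrix σ id =
      fromBlocks (A.submatrix b id) (B.submatrix b id) (A.submatrix c id) (B.submatrix c id) := by
    ext (i | i) (j | j) <;> rfl
  have hmul : L * ((fromCols A B).submatrix σ id)
      = fromBlocks (Aᵀ * A) 0 (A.submatrix c id) (B.submatrix c id) := by
    rw [hC, hL, Matrix.fromBlocks_multiply]
    rw [sum_split σ A A, sum_split σ A B, hAB]
    simp
  have h1 := congrArg Matrix.det hmul
  rw [Matrix.det_mul, hL, Matrix.det_fromBlocks_zero₂₁, Matrix.det_fromBlocks_zero₁₂,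
    Matrix.det_one, mul_one, Matrix.det_transpose] at h1
  exact h1

lemma gram_fromColumns {n m k : ℕ} (A : Matrix (Fin n) (Fin m) ℤ) (B : Matrix (Fin n) (Fin k) ℤ)
    (hAB : Aᵀ * B = 0) (σ : Fin m ⊕ Fin k ≃ Fin n) :
    ((fromCols A B).submatrix σ id).det * ((fromCols A B).submatrix σ id).det
      = (Aᵀ * A).det * (Bᵀ * B).det := by
  have hBA : Bᵀ * A = 0 := by
    have := congrArg Matrix.transpose hAB
    rwa [Matrix.transpose_mul, Matrix.transpose_transpose, Matrix.transpose_zero] at this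
  have h1 : ((fromCols A B).submatrix σ id)ᵀ * ((fromCols A B).submatrix σ id)
      = fromBlocks (Aᵀ * A) 0 0 (Bᵀ * B) := by
    rw [Matrix.transpose_submatrix, Matrix.transpose_fromCols,
      Matrix.submatrix_mul_equiv (fromRows Aᵀ Bᵀ) (fromCols A B) id σ id,
      Matrix.submatrix_id_id, Matrix.fromRows_mul_fromCols, hAB, hBA]
  have h2 := congrArg Matrix.det h1
  rwa [Matrix.det_mul, Matrix.det_transpose, Matrix.det_fromBlocks_zero₂₁] at h2

lemma det_gram_ne_zero {n p : ℕ} (M : Matrix (Fin n) (Fin p) ℤ) (hM : M.rank = p) :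
    (Mᵀ * M).det ≠ 0 := by
  intro hdet
  obtain ⟨v, hv, hv0⟩ := (Matrix.exists_mulVec_eq_zero_iff (M := Mᵀ * M)).mpr hdet
  have hMv : M.mulVec v = 0 := by
    have h0 : v ⬝ᵥ (Mᵀ * M).mulVec v = 0 := by rw [hv0, dotProduct_zero]
    rw [← Matrix.mulVec_mulVec, Matrix.dotProduct_mulVec, Matrix.vecMul_transpose] at h0
    exact dotProduct_self_eq_zero.mp h0
  have hfin : Module.finrank ℤ ((⊤ : Submodule ℤ (Fin p → ℤ)).map M.mulVecLin)
      = Module.finrank ℤ (⊤ : Submodule ℤ (Fin p → ℤ)) := by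
    rw [Submodule.map_top, finrank_top]
    rw [Matrix.rank] at hM
    rw [hM, Module.finrank_fintype_fun_eq_card]
    simp
  have hdisj := Submodule.disjoint_ker_of_finrank_le (L := ⊤) M.mulVecLin hfin.ge
  have hker : v ∈ LinearMap.ker M.mulVecLin := by
    simpa [Matrix.mulVecLin_apply] using hMv
  have : v = 0 := by
    have := hdisj.eq_bot ▸ (Submodule.mem_inf.mpr ⟨Submodule.mem_top, hker⟩)
    simpa using this
  exact hv this

lemma abs_det_submatrix_eq {ι κ : Type*} [Fintype ι] [DecidableEq ι] (M : Matrix κ ι ℤ)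
    (f g : ι → κ) (π : Equiv.Perm ι) (h : ∀ i, f i = g (π i)) :
    |(M.submatrix f id).det| = |(M.submatrix g id).det| := by
  have he : M.submatrix f id = (M.submatrix g id).submatrix π id := by
    ext i j; simp [h i]
  rw [he, Matrix.det_permute]
  rcases Int.units_eq_one_or (Equiv.Perm.sign π) with h1 | h1 <;> simp [h1]

lemma abs_det_sub_equiv {ι κ : Type*} [Fintype ι] [DecidableEq ι] (M : Matrix κ ι ℤ)
    (σ τ : ι ≃ κ) : |(M.submatrix σ id).det| = |(M.submatrix τ id).det| :=
  abs_det_submatrix_eq M σ τ (σ.trans τ.symm) (fun i => (τ.apply_symm_apply (σ i)).symm)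

lemma exists_perm_factor {n p : ℕ} (f : Fin p → Fin n) (hf : Function.Injective f)
    (hcard : (Finset.univ.image f).card = p) :
    ∃ π : Equiv.Perm (Fin p),
      ∀ i, f i = ((Finset.univ.image f).orderIsoOfFin hcard (π i) : Fin n) := by
  set S := Finset.univ.image f with hSdef
  have hmem : ∀ i, f i ∈ S := fun i => Finset.mem_image_of_mem f (Finset.mem_univ i)
  set u : Fin p → Fin p := fun i => (S.orderIsoOfFin hcard).symm ⟨f i, hmem i⟩ with hu
  have huinj : Function.Injective u := by
    intro i j h
    apply hf
    have := congrArg (fun x => ((S.orderIsoOfFin hcard) x : Fin n)) h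
    simpa [hu] using this
  refine ⟨Equiv.ofBijective u (Finite.injective_iff_bijective.mp huinj), fun i => ?_⟩
  show f i = ((S.orderIsoOfFin hcard) ((S.orderIsoOfFin hcard).symm ⟨f i, hmem i⟩) : Fin n)
  rw [OrderIso.apply_symm_apply]

lemma orderIsoOfFin_congr {α : Type*} [LinearOrder α] {S T : Finset α} (h : S = T) {p : ℕ}
    (hS : S.card = p) (hT : T.card = p) (i : Fin p) :
    (S.orderIsoOfFin hS i : α) = T.orderIsoOfFin hT i := by subst h; rfl

lemma per_set {n m : ℕ} (A : Matrix (Fin n) (Fin m) ℤ) (B : Matrix (Fin n) (Fin (n - m)) ℤ)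
    (hAB : Aᵀ * B = 0) (σ₀ : Fin m ⊕ Fin (n - m) ≃ Fin n)
    (S : Finset (Fin n)) (hS : S.card = m) (hS' : Sᶜ.card = n - m) :
    |((fromCols A B).submatrix σ₀ id).det|
        * |(A.submatrix (fun i : Fin m => (S.orderIsoOfFin hS i : Fin n)) id).det|
      = |(Aᵀ * A).det|
        * |(B.submatrix (fun i : Fin (n - m) => (Sᶜ.orderIsoOfFin hS' i : Fin n)) id).det| := by
  set bS : Fin m → Fin n := fun i => (S.orderIsoOfFin hS i : Fin n) with hbS
  set cS : Fin (n - m) → Fin n := fun i => (Sᶜ.orderIsoOfFin hS' i : Fin n) with hcS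
  have hinj : Function.Injective (Sum.elim bS cS) := by
    intro x y hxy
    have hbmem : ∀ i, bS i ∈ S := fun i => (S.orderIsoOfFin hS i).2
    have hcmem : ∀ i, cS i ∈ Sᶜ := fun i => (Sᶜ.orderIsoOfFin hS' i).2
    have hbinj : Function.Injective bS := fun i j h => by
      simpa using (S.orderIsoOfFin hS).injective (Subtype.ext h)
    have hcinj : Function.Injective cS := fun i j h => by
      simpa using (Sᶜ.orderIsoOfFin hS').injective (Subtype.ext h)
    rcases x with x | x <;> rcases y with y | y
    · exact congrArg Sum.inl (hbinj hxy)
    · have h : bS x = cS y := hxy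
      exact absurd (h ▸ hbmem x) (by simpa using (Finset.mem_compl.mp (hcmem y)))
    · have h : bS y = cS x := hxy.symm
      exact absurd (h ▸ hbmem y) (by simpa using (Finset.mem_compl.mp (hcmem x)))
    · exact congrArg Sum.inr (hcinj hxy)
  have hcards : Fintype.card (Fin m ⊕ Fin (n - m)) = Fintype.card (Fin n) := by
    have := Finset.card_add_card_compl S
    simp only [hS, hS', Fintype.card_fin] at this ⊢
    simpa using this
  have hbij : Function.Bijective (Sum.elim bS cS) :=
    (Fintype.bijective_iff_injective_and_card _).mpr ⟨hinj, hcards⟩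
  set σ : Fin m ⊕ Fin (n - m) ≃ Fin n := Equiv.ofBijective _ hbij with hσ
  have hkey := key A B hAB σ
  have h1 : σ ∘ Sum.inl = bS := rfl
  have h2 : σ ∘ Sum.inr = cS := rfl
  rw [h1, h2] at hkey
  have habs := congrArg abs hkey
  rw [abs_mul, abs_mul] at habs
  rw [abs_det_sub_equiv (fromCols A B) σ₀ σ]
  rw [mul_comm]
  exact habs

lemma int_gcd_nonneg {ι : Type*} (s : Finset ι) (f : ι → ℤ) : 0 ≤ s.gcd f := by
  have h := Finset.normalize_gcd (s := s) (f := f)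
  rw [← Int.abs_eq_normalize] at h
  rw [← h]
  exact abs_nonneg _

end Aux

/-- The gcd of determinants of all `m × m` (row-selected) submatrices of an
`n × m` integer matrix.  Non-injective row selections contribute a zero
determinant, which does not affect the gcd. -/
def gcdMinors {n m : ℕ} (M : Matrix (Fin n) (Fin m) ℤ) : ℤ :=
  Finset.univ.gcd (fun f : Fin m → Fin n => (M.submatrix f id).det)

/-- For `A ∈ ℤ^{n×m}`, `B ∈ ℤ^{n×(n−m)}` with full column ranks
and `AᵀB = 0`, and any row subset `𝔅` of size `m` with complement `𝔑`,
`Δ_gcd(B)·|det A_{𝔅*}| = Δ_gcd(A)·|det B_{𝔑*}|`. -/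
theorem stmt3 (n m : ℕ) (hmn : m ≤ n)
    (A : Matrix (Fin n) (Fin m) ℤ) (B : Matrix (Fin n) (Fin (n - m)) ℤ)
    (hA : A.rank = m) (hB : B.rank = n - m) (hAB : A.transpose * B = 0)
    (𝔅 : Finset (Fin n)) (h𝔅 : 𝔅.card = m) (h𝔑 : 𝔅ᶜ.card = n - m) :
    gcdMinors B * |(A.submatrix (fun i : Fin m => ((𝔅.orderIsoOfFin h𝔅 i : Fin n))) id).det|
      = gcdMinors A * |(B.submatrix (fun i : Fin (n - m) => ((𝔅ᶜ.orderIsoOfFin h𝔑 i : Fin n))) id).det| := by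
  classical
  have hD : (Aᵀ * A).det ≠ 0 := det_gram_ne_zero A hA
  have hE : (Bᵀ * B).det ≠ 0 := det_gram_ne_zero B hB
  have hmk : m + (n - m) = n := Nat.add_sub_cancel' hmn
  let σ₀ : Fin m ⊕ Fin (n - m) ≃ Fin n := finSumFinEquiv.trans (finCongr hmk)
  have hKK : ((fromCols A B).submatrix σ₀ id).det * ((fromCols A B).submatrix σ₀ id).det
      = (Aᵀ * A).det * (Bᵀ * B).det := gram_fromColumns A B hAB σ₀
  have hKne : ((fromCols A B).submatrix σ₀ id).det ≠ 0 := by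
    intro h; rw [h, mul_zero] at hKK; exact (mul_ne_zero hD hE) hKK.symm
  set K := ((fromCols A B).submatrix σ₀ id).det with hKdef
  set D := (Aᵀ * A).det with hDdef
  have hcompl : ∀ S : Finset (Fin n), S.card = m → Sᶜ.card = n - m := fun S h => by
    rw [Finset.card_compl, h, Fintype.card_fin]
  have habsmulA : Finset.univ.gcd (fun f : Fin m → Fin n => |K| * (A.submatrix f id).det)
      = |K| * gcdMinors A := by
    rw [Finset.gcd_mul_left]
    congr 1
    rw [← Int.abs_eq_normalize, abs_abs]
  have habsmulB : Finset.univ.gcd (fun g : Fin (n - m) → Fin n => |D| * (B.submatrix g id).det)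
      = |D| * gcdMinors B := by
    rw [Finset.gcd_mul_left]
    congr 1
    rw [← Int.abs_eq_normalize, abs_abs]
  have dvd1 : |D| * gcdMinors B ∣ |K| * gcdMinors A := by
    rw [← habsmulA]
    refine Finset.dvd_gcd fun f _ => ?_
    by_cases hf : Function.Injective f
    · have hcard : (Finset.univ.image f).card = m := by
        rw [Finset.card_image_of_injective _ hf, Finset.card_univ, Fintype.card_fin]
      obtain ⟨π, hπ⟩ := exists_perm_factor f hf hcard
      have h1 : |(A.submatrix f id).det|
          = |(A.submatrix
              (fun i : Fin m => ((Finset.univ.image f).orderIsoOfFin hcard i : Fin n)) id).det| :=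
        abs_det_submatrix_eq A f _ π hπ
      have h2 := per_set A B hAB σ₀ (Finset.univ.image f) hcard (hcompl _ hcard)
      have h3 : |D| * gcdMinors B ∣ |D| * |(B.submatrix
          (fun i : Fin (n - m) =>
            (((Finset.univ.image f)ᶜ).orderIsoOfFin (hcompl _ hcard) i : Fin n)) id).det| :=
        mul_dvd_mul_left _ ((dvd_abs _ _).mpr (Finset.gcd_dvd (Finset.mem_univ _)))
      rw [← h2, ← h1] at h3
      have h4 : |K| * |(A.submatrix f id).det| = abs (|K| * (A.submatrix f id).det) := by
        rw [abs_mul, abs_abs]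
      rw [h4] at h3
      exact (dvd_abs _ _).mp h3
    · obtain ⟨i, j, hij, hne⟩ : ∃ i j, f i = f j ∧ i ≠ j := by
        unfold Function.Injective at hf
        push_neg at hf
        obtain ⟨i, j, h1', h2'⟩ := hf
        exact ⟨i, j, h1', h2'⟩
      have hz : (A.submatrix f id).det = 0 :=
        Matrix.det_zero_of_row_eq hne (by ext l; simp [Matrix.submatrix_apply, hij])
      rw [hz, mul_zero]
      exact dvd_zero _
  have dvd2 : |K| * gcdMinors A ∣ |D| * gcdMinors B := by
    rw [← habsmulB]
    refine Finset.dvd_gcd fun g _ => ?_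
    by_cases hg : Function.Injective g
    · have hcardT : (Finset.univ.image g).card = n - m := by
        rw [Finset.card_image_of_injective _ hg, Finset.card_univ, Fintype.card_fin]
      have hScard : ((Finset.univ.image g)ᶜ).card = m := by
        rw [Finset.card_compl, hcardT, Fintype.card_fin]
        omega
      have hS' : ((Finset.univ.image g)ᶜ)ᶜ.card = n - m := hcompl _ hScard
      obtain ⟨π, hπ⟩ := exists_perm_factor g hg hcardT
      have hTT : ((Finset.univ.image g)ᶜ)ᶜ = Finset.univ.image g := compl_compl _
      have h1 : |(B.submatrix g id).det| = |(B.submatrix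
          (fun i : Fin (n - m) => ((((Finset.univ.image g)ᶜ)ᶜ).orderIsoOfFin hS' i : Fin n))
          id).det| := by
        apply abs_det_submatrix_eq B g _ π
        intro i
        exact (hπ i).trans (orderIsoOfFin_congr hTT hS' hcardT (π i)).symm
      have h2 := per_set A B hAB σ₀ ((Finset.univ.image g)ᶜ) hScard hS'
      have h3 : |K| * gcdMinors A ∣ |K| * |(A.submatrix
          (fun i : Fin m => (((Finset.univ.image g)ᶜ).orderIsoOfFin hScard i : Fin n)) id).det| :=
        mul_dvd_mul_left _ ((dvd_abs _ _).mpr (Finset.gcd_dvd (Finset.mem_univ _)))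
      rw [h2, ← h1] at h3
      have h4 : |D| * |(B.submatrix g id).det| = abs (|D| * (B.submatrix g id).det) := by
        rw [abs_mul, abs_abs]
      rw [h4] at h3
      exact (dvd_abs _ _).mp h3
    · obtain ⟨i, j, hij, hne⟩ : ∃ i j, g i = g j ∧ i ≠ j := by
        unfold Function.Injective at hg
        push_neg at hg
        obtain ⟨i, j, h1', h2'⟩ := hg
        exact ⟨i, j, h1', h2'⟩
      have hz : (B.submatrix g id).det = 0 :=
        Matrix.det_zero_of_row_eq hne (by ext l; simp [Matrix.submatrix_apply, hij])
      rw [hz, mul_zero]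
      exact dvd_zero _
  have heq : |K| * gcdMinors A = |D| * gcdMinors B :=
    Int.dvd_antisymm (mul_nonneg (abs_nonneg _) (int_gcd_nonneg _ _))
      (mul_nonneg (abs_nonneg _) (int_gcd_nonneg _ _)) dvd2 dvd1
  have hmain := per_set A B hAB σ₀ 𝔅 h𝔅 h𝔑
  have hKabs : |K| ≠ 0 := abs_ne_zero.mpr hKne
  apply mul_left_cancel₀ hKabs
  calc |K| * (gcdMinors B
        * |(A.submatrix (fun i : Fin m => ((𝔅.orderIsoOfFin h𝔅 i : Fin n))) id).det|)
      = gcdMinors B * (|K|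
        * |(A.submatrix (fun i : Fin m => ((𝔅.orderIsoOfFin h𝔅 i : Fin n))) id).det|) := by ring
    _ = gcdMinors B * (|D|
        * |(B.submatrix (fun i : Fin (n - m) => ((𝔅ᶜ.orderIsoOfFin h𝔑 i : Fin n))) id).det|) := by
        rw [hmain]
    _ = (|D| * gcdMinors B)
        * |(B.submatrix (fun i : Fin (n - m) => ((𝔅ᶜ.orderIsoOfFin h𝔑 i : Fin n))) id).det| := by
        ring
    _ = (|K| * gcdMinors A)
        * |(B.submatrix (fun i : Fin (n - m) => ((𝔅ᶜ.orderIsoOfFin h𝔑 i : Fin n))) id).det| := by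
        rw [heq]
    _ = |K| * (gcdMinors A
        * |(B.submatrix (fun i : Fin (n - m) => ((𝔅ᶜ.orderIsoOfFin h𝔑 i : Fin n))) id).det|) := by
        ring
end

section
/- Steinitz's theorem: let ‖·‖ be a norm on ℝ^m and x₁, …, x_n ∈ ℝ^m with ∑ᵢ xᵢ = 0 and ‖xᵢ‖ ≤ 1 for all i. Then there exists a permutation π of {1,…,n} such that for all k ∈ {1,…,n}, ‖∑_{i=1}^{k} x_{π(i)}‖ ≤ m. -/
open Finset

section aux

variable {E : Type*} [NormedAddCommGroup E] [NormedSpace ℝ E]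

/-- Feasibility: a fractional selection of `B` with sum `|B| - m` and zero vector sum. -/
def Feas (m : ℕ) {n : ℕ} (x : Fin n → E) (B : Finset (Fin n)) : Prop :=
  ∃ l : Fin n → ℝ, (∀ i ∈ B, 0 ≤ l i) ∧ (∀ i ∈ B, l i ≤ 1) ∧
    (∑ i ∈ B, l i = (B.card : ℝ) - m) ∧ (∑ i ∈ B, l i • x i = 0)

/-- Core descent lemma: a fractional solution with sum `|B| - (m+1)` can be improved to
one having a zero coordinate. Induction on the number of fractional coordinates. -/
lemma descend (m : ℕ) [FiniteDimensional ℝ E] (hdim : Module.finrank ℝ E = m)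
    {n : ℕ} (x : Fin n → E) (B : Finset (Fin n)) :
    ∀ (d : ℕ) (μ : Fin n → ℝ),
      (B.filter (fun i => μ i ≠ 0 ∧ μ i ≠ 1)).card = d →
      (∀ i ∈ B, 0 ≤ μ i) → (∀ i ∈ B, μ i ≤ 1) →
      (∑ i ∈ B, μ i = (B.card : ℝ) - (m + 1)) →
      (∑ i ∈ B, μ i • x i = 0) →
      ∃ μ' : Fin n → ℝ, (∃ i₀ ∈ B, μ' i₀ = 0) ∧ (∀ i ∈ B, 0 ≤ μ' i) ∧ (∀ i ∈ B, μ' i ≤ 1)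
        ∧ (∑ i ∈ B, μ' i = (B.card : ℝ) - (m + 1)) ∧ (∑ i ∈ B, μ' i • x i = 0) := by
  intro d
  induction d using Nat.strong_induction_on with
  | _ d IH =>
    intro μ hd h0 h1 hs hx
    by_cases hzero : ∃ i₀ ∈ B, μ i₀ = 0
    · exact ⟨μ, hzero, h0, h1, hs, hx⟩
    push_neg at hzero
    set F : Finset (Fin n) := B.filter (fun i => μ i ≠ 0 ∧ μ i ≠ 1) with hF
    have hFB : F ⊆ B := filter_subset _ _
    have hone : ∀ i ∈ B, i ∉ F → μ i = 1 := by
      intro i hiB hiF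
      have hna : ¬ (μ i ≠ 0 ∧ μ i ≠ 1) := fun hcontra => hiF (Finset.mem_filter.mpr ⟨hiB, hcontra⟩)
      rcases not_and_or.mp hna with h | h
      · exact absurd (not_not.mp h) (hzero i hiB)
      · exact not_not.mp h
    have hFsum : ∑ i ∈ F, μ i = (F.card : ℝ) - (m + 1) := by
      have hsplit : ∑ i ∈ B \ F, μ i + ∑ i ∈ F, μ i = ∑ i ∈ B, μ i :=
        Finset.sum_sdiff hFB
      have hBS : ∑ i ∈ B \ F, μ i = ((B.card - F.card : ℕ) : ℝ) := by
        rw [← Finset.card_sdiff_of_subset hFB]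
        rw [Finset.sum_congr rfl (fun i hi => hone i (Finset.mem_sdiff.mp hi).1
          (Finset.mem_sdiff.mp hi).2)]
        simp
      have hcard := Finset.card_le_card hFB
      have : ((B.card - F.card : ℕ) : ℝ) = (B.card : ℝ) - F.card := by
        push_cast [Nat.cast_sub hcard]; ring
      rw [hBS, this] at hsplit
      linarith [hsplit, hs]
    -- F is nonempty and has at least m + 2 elements
    have hFne : F.Nonempty := by
      rcases F.eq_empty_or_nonempty with h | h
      · exfalso
        rw [h] at hFsum
        simp at hFsum
        linarith [hFsum]
      · exact h
    have hFpos : ∀ i ∈ F, 0 < μ i := by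
      intro i hi
      have hiB := hFB hi
      have := h0 i hiB
      have hne := (Finset.mem_filter.mp hi).2.1
      exact lt_of_le_of_ne this (Ne.symm hne)
    have hFcard : m + 2 ≤ F.card := by
      have hpos : 0 < ∑ i ∈ F, μ i := Finset.sum_pos hFpos hFne
      rw [hFsum] at hpos
      have : (m : ℝ) + 1 < F.card := by linarith
      exact_mod_cast by exact_mod_cast Nat.add_one_le_iff.mpr (by exact_mod_cast this)
    -- the family (x i, 1) over F cannot be linearly independent
    have hnotli : ¬ LinearIndependent ℝ (fun i : {i // i ∈ F} => ((x i, 1) : E × ℝ)) := by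
      intro hli
      have := hli.fintype_card_le_finrank
      rw [Module.finrank_prod, hdim, Module.finrank_self] at this
      rw [Fintype.card_coe] at this
      omega
    obtain ⟨g, hg, i₁, hgi₁⟩ := Fintype.not_linearIndependent_iff.mp hnotli
    classical
    set ν : Fin n → ℝ := fun j => if h : j ∈ F then g ⟨j, h⟩ else 0 with hν
    have hν_zero : ∀ j, j ∉ F → ν j = 0 := by
      intro j hj; simp [hν, hj]
    have hν_mem : ∀ j (h : j ∈ F), ν j = g ⟨j, h⟩ := by
      intro j h; simp [hν, h]
    -- the two linear relations satisfied by ν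
    have hgsum : (∑ i : {i // i ∈ F}, g i • ((x i, 1) : E × ℝ)) = 0 := hg
    have hvsumx : ∑ i ∈ F, ν i • x i = 0 := by
      have h1' := congrArg Prod.fst hgsum
      simp only [Prod.fst_sum, Prod.smul_mk, Prod.fst_zero] at h1'
      rw [← Finset.sum_attach F (fun i => ν i • x i)]
      simpa [hν] using h1'
    have hvsum1 : ∑ i ∈ F, ν i = 0 := by
      have h2' := congrArg Prod.snd hgsum
      simp only [Prod.snd_sum, Prod.smul_mk, Prod.snd_zero, smul_eq_mul, mul_one] at h2'
      rw [← Finset.sum_attach F (fun i => ν i)]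
      simpa [hν] using h2'
    have hi₁F : (i₁ : Fin n) ∈ F := i₁.2
    have hνi₁ : ν i₁ ≠ 0 := by rw [hν_mem _ hi₁F]; simpa using hgi₁
    -- the step size
    set S : Finset (Fin n) := F.filter (fun i => ν i ≠ 0) with hS
    have hSne : S.Nonempty := ⟨i₁, Finset.mem_filter.mpr ⟨hi₁F, hνi₁⟩⟩
    set c : Fin n → ℝ := fun i => if 0 < ν i then (1 - μ i) / ν i else μ i / (-ν i) with hc
    set t : ℝ := S.inf' hSne c with ht
    have hc_nonneg : ∀ i ∈ S, 0 ≤ c i := by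
      intro i hi
      obtain ⟨hiF, hiν⟩ := Finset.mem_filter.mp hi
      have hiB := hFB hiF
      by_cases hp : 0 < ν i
      · simp only [hc, if_pos hp]
        exact div_nonneg (by linarith [h1 i hiB]) hp.le
      · simp only [hc, if_neg hp]
        have : ν i < 0 := lt_of_le_of_ne (not_lt.mp hp) hiν
        exact div_nonneg (h0 i hiB) (by linarith)
    have ht_nonneg : 0 ≤ t := Finset.le_inf' hSne c hc_nonneg
    have ht_le : ∀ i ∈ S, t ≤ c i := fun i hi => Finset.inf'_le c hi
    set μ' : Fin n → ℝ := fun i => μ i + t * ν i with hμ'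
    -- bounds for μ'
    have hbounds : ∀ i ∈ B, 0 ≤ μ' i ∧ μ' i ≤ 1 := by
      intro i hiB
      by_cases hiν : ν i = 0
      · simp [hμ', hiν, h0 i hiB, h1 i hiB]
      have hiF : i ∈ F := by
        by_contra h
        exact hiν (hν_zero i h)
      have hiS : i ∈ S := Finset.mem_filter.mpr ⟨hiF, hiν⟩
      have htc := ht_le i hiS
      rcases lt_or_gt_of_ne hiν with hneg | hpos
      · constructor
        · have : c i = μ i / (-ν i) := by simp [hc, not_lt.mpr hneg.le]
          rw [this] at htc
          have h2 : t * (-ν i) ≤ (μ i / (-ν i)) * (-ν i) :=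
            mul_le_mul_of_nonneg_right htc (by linarith)
          rw [div_mul_cancel₀ _ (by linarith : -ν i ≠ 0)] at h2
          simp only [hμ']
          nlinarith
        · have : t * ν i ≤ 0 := mul_nonpos_of_nonneg_of_nonpos ht_nonneg hneg.le
          simp only [hμ']
          linarith [h1 i hiB]
      · constructor
        · have : 0 ≤ t * ν i := mul_nonneg ht_nonneg hpos.le
          simp only [hμ']
          linarith [h0 i hiB]
        · have : c i = (1 - μ i) / ν i := by simp [hc, hpos]
          rw [this] at htc
          have h2 : t * ν i ≤ ((1 - μ i) / ν i) * ν i :=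
            mul_le_mul_of_nonneg_right htc hpos.le
          rw [div_mul_cancel₀ _ (ne_of_gt hpos)] at h2
          simp only [hμ']
          linarith
    -- sums preserved
    have hνBsum : ∑ i ∈ B, ν i = 0 := by
      rw [← Finset.sum_subset hFB (fun i hiB hiF => hν_zero i hiF)]
      exact hvsum1
    have hνBx : ∑ i ∈ B, ν i • x i = 0 := by
      rw [← Finset.sum_subset hFB (fun i hiB hiF => by rw [hν_zero i hiF, zero_smul])]
      exact hvsumx
    have hs' : ∑ i ∈ B, μ' i = (B.card : ℝ) - (m + 1) := by
      simp only [hμ']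
      rw [Finset.sum_add_distrib, ← Finset.mul_sum, hνBsum, mul_zero, add_zero, hs]
    have hx' : ∑ i ∈ B, μ' i • x i = 0 := by
      simp only [hμ', add_smul, mul_smul]
      rw [Finset.sum_add_distrib, ← Finset.smul_sum, hνBx, smul_zero, add_zero, hx]
    -- fractional support strictly decreases
    obtain ⟨istar, histar, hcistar⟩ := Finset.exists_mem_eq_inf' hSne c
    have histarF : istar ∈ F := (Finset.mem_filter.mp histar).1
    have histarν : ν istar ≠ 0 := (Finset.mem_filter.mp histar).2
    have htt : t = c istar := by rw [ht, hcistar]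
    have hμ'star : μ' istar = 0 ∨ μ' istar = 1 := by
      rcases lt_or_gt_of_ne histarν with hneg | hpos
      · left
        have hcs : c istar = μ istar / (-ν istar) := by simp [hc, not_lt.mpr hneg.le]
        simp only [hμ', htt, hcs]
        field_simp [histarν]
        ring
      · right
        have hcs : c istar = (1 - μ istar) / ν istar := by simp [hc, hpos]
        simp only [hμ', htt, hcs]
        field_simp [histarν]
        ring
    have hsub : B.filter (fun i => μ' i ≠ 0 ∧ μ' i ≠ 1) ⊆ F.erase istar := by
      intro i hi
      obtain ⟨hiB, hi1, hi2⟩ := Finset.mem_filter.mp hi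
      have hiF : i ∈ F := by
        by_contra h
        have hν0 : ν i = 0 := hν_zero i h
        have hμeq : μ' i = μ i := by simp [hμ', hν0]
        exact hi2 (by rw [hμeq, hone i hiB h])
      refine Finset.mem_erase.mpr ⟨?_, hiF⟩
      rintro rfl
      rcases hμ'star with h | h
      · exact hi1 h
      · exact hi2 h
    have hlt : (B.filter (fun i => μ' i ≠ 0 ∧ μ' i ≠ 1)).card < d := by
      calc (B.filter (fun i => μ' i ≠ 0 ∧ μ' i ≠ 1)).card
          ≤ (F.erase istar).card := Finset.card_le_card hsub
        _ < F.card := by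
            rw [Finset.card_erase_of_mem histarF]
            omega
        _ = d := hd
    exact IH _ hlt μ' rfl (fun i hi => (hbounds i hi).1) (fun i hi => (hbounds i hi).2) hs' hx'


/-- Removal step: from a feasible set of size `≥ m+1` one can delete an element
keeping feasibility. -/
lemma remove_one (m : ℕ) [FiniteDimensional ℝ E] (hdim : Module.finrank ℝ E = m)
    {n : ℕ} (x : Fin n → E) (B : Finset (Fin n)) (hB : m + 1 ≤ B.card)
    (hFeas : Feas m x B) : ∃ i₀ ∈ B, Feas m x (B.erase i₀) := by
  obtain ⟨l, hl0, hl1, hls, hlx⟩ := hFeas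
  have hden : (0 : ℝ) < (B.card : ℝ) - m := by
    have : (m : ℝ) + 1 ≤ (B.card : ℝ) := by exact_mod_cast hB
    linarith
  set a : ℝ := ((B.card : ℝ) - (m + 1)) / ((B.card : ℝ) - m) with ha
  have ha0 : 0 ≤ a := by
    apply div_nonneg _ hden.le
    have : (m : ℝ) + 1 ≤ (B.card : ℝ) := by exact_mod_cast hB
    linarith
  have ha1 : a ≤ 1 := by
    rw [ha, div_le_one hden]; linarith
  set μ : Fin n → ℝ := fun i => a * l i with hμ
  have h0 : ∀ i ∈ B, 0 ≤ μ i := fun i hi => mul_nonneg ha0 (hl0 i hi)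
  have h1 : ∀ i ∈ B, μ i ≤ 1 := fun i hi =>
    mul_le_one₀ ha1 (hl0 i hi) (hl1 i hi)
  have hs : ∑ i ∈ B, μ i = (B.card : ℝ) - (m + 1) := by
    simp only [hμ]
    rw [← Finset.mul_sum, hls, ha, div_mul_cancel₀ _ hden.ne']
  have hx : ∑ i ∈ B, μ i • x i = 0 := by
    simp only [hμ, mul_smul]
    rw [← Finset.smul_sum, hlx, smul_zero]
  obtain ⟨μ', ⟨i₀, hi₀B, hi₀⟩, h0', h1', hs', hx'⟩ :=
    descend m hdim x B _ μ rfl h0 h1 hs hx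
  refine ⟨i₀, hi₀B, μ', fun i hi => h0' i (Finset.mem_of_mem_erase hi),
    fun i hi => h1' i (Finset.mem_of_mem_erase hi), ?_, ?_⟩
  · have hsplit : ∑ i ∈ B.erase i₀, μ' i = ∑ i ∈ B, μ' i - μ' i₀ := by
      rw [← Finset.add_sum_erase B μ' hi₀B]; ring
    rw [hsplit, hs', hi₀, Finset.card_erase_of_mem hi₀B]
    have hBpos : 1 ≤ B.card := le_trans (by omega) hB
    push_cast [Nat.cast_sub hBpos]
    ring
  · have hsplit : ∑ i ∈ B.erase i₀, μ' i • x i = ∑ i ∈ B, μ' i • x i - μ' i₀ • x i₀ := by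
      rw [← Finset.add_sum_erase B (fun i => μ' i • x i) hi₀B]; abel
    rw [hsplit, hx', hi₀, zero_smul, sub_zero]

/-- Norm bound for the full sum of a feasible (or small) set. -/
lemma norm_bound (m : ℕ) {n : ℕ} (x : Fin n → E) (hnorm : ∀ i, ‖x i‖ ≤ 1)
    (B : Finset (Fin n)) (hP : B.card ≤ m ∨ Feas m x B) :
    ‖∑ i ∈ B, x i‖ ≤ (m : ℝ) := by
  rcases hP with h | ⟨l, hl0, hl1, hls, hlx⟩
  · calc ‖∑ i ∈ B, x i‖ ≤ ∑ i ∈ B, ‖x i‖ := norm_sum_le _ _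
      _ ≤ ∑ i ∈ B, (1 : ℝ) := Finset.sum_le_sum (fun i _ => hnorm i)
      _ = (B.card : ℝ) := by simp
      _ ≤ (m : ℝ) := by exact_mod_cast h
  · have key : ∑ i ∈ B, x i = ∑ i ∈ B, (1 - l i) • x i := by
      have e1 : ∑ i ∈ B, (1 - l i) • x i = ∑ i ∈ B, (x i - l i • x i) := by
        apply Finset.sum_congr rfl; intro i _; rw [sub_smul, one_smul]
      rw [e1, Finset.sum_sub_distrib, hlx, sub_zero]
    rw [key]
    calc ‖∑ i ∈ B, (1 - l i) • x i‖ ≤ ∑ i ∈ B, ‖(1 - l i) • x i‖ := norm_sum_le _ _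
      _ ≤ ∑ i ∈ B, (1 - l i) := by
          apply Finset.sum_le_sum
          intro i hi
          rw [norm_smul, Real.norm_eq_abs, abs_of_nonneg (by linarith [hl1 i hi])]
          calc (1 - l i) * ‖x i‖ ≤ (1 - l i) * 1 :=
            mul_le_mul_of_nonneg_left (hnorm i) (by linarith [hl1 i hi])
            _ = 1 - l i := mul_one _
      _ = (B.card : ℝ) - ∑ i ∈ B, l i := by rw [Finset.sum_sub_distrib]; simp
      _ = (m : ℝ) := by rw [hls]; ring

/-- Build an ordering of `B` with all prefix sums bounded by `m`. -/
lemma build_list (m : ℕ) [FiniteDimensional ℝ E] (hdim : Module.finrank ℝ E = m)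
    {n : ℕ} (x : Fin n → E) (hnorm : ∀ i, ‖x i‖ ≤ 1) :
    ∀ B : Finset (Fin n), (B.card ≤ m ∨ Feas m x B) →
      ∃ l : List (Fin n), l.Nodup ∧ l.toFinset = B ∧
        ∀ k : ℕ, ‖((l.take k).map x).sum‖ ≤ (m : ℝ) := by
  intro B
  induction B using Finset.strongInduction with
  | _ B IH =>
    intro hP
    rcases B.eq_empty_or_nonempty with rfl | hne
    · exact ⟨[], by simp, by simp, fun k => by simp⟩
    · have step : ∃ i₀ ∈ B, ((B.erase i₀).card ≤ m ∨ Feas m x (B.erase i₀)) := by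
        by_cases hc : B.card ≤ m
        · obtain ⟨i₀, hi₀⟩ := hne
          exact ⟨i₀, hi₀, Or.inl (le_trans (Finset.card_le_card (Finset.erase_subset _ _)) hc)⟩
        · have hB : m + 1 ≤ B.card := by omega
          have hFeas : Feas m x B := hP.resolve_left hc
          obtain ⟨i₀, hi₀B, hF'⟩ := remove_one m hdim x B hB hFeas
          exact ⟨i₀, hi₀B, Or.inr hF'⟩
      obtain ⟨i₀, hi₀B, hP'⟩ := step
      obtain ⟨l', hnd', htf', hbd'⟩ := IH (B.erase i₀) (Finset.erase_ssubset hi₀B) hP'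
      have hnodup : (l' ++ [i₀]).Nodup := by
        rw [List.nodup_append]
        refine ⟨hnd', List.nodup_singleton _, ?_⟩
        intro a ha b hb
        rw [List.mem_singleton] at hb
        rintro rfl
        subst hb
        have : a ∈ l'.toFinset := List.mem_toFinset.mpr ha
        rw [htf'] at this
        exact (Finset.notMem_erase a B) this
      have huni : (l' ++ [i₀]).toFinset = B := by
        ext a
        rw [List.toFinset_append, Finset.mem_union, htf']
        simp only [List.toFinset_cons, List.toFinset_nil, Finset.mem_insert,
          Finset.notMem_empty, or_false, Finset.mem_erase]
        constructor
        · rintro (⟨hne', ha⟩ | rfl)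
          · exact ha
          · exact hi₀B
        · intro ha
          by_cases h : a = i₀
          · exact Or.inr h
          · exact Or.inl ⟨h, ha⟩
      refine ⟨l' ++ [i₀], hnodup, huni, ?_⟩
      intro k
      by_cases hk : k ≤ l'.length
      · rw [List.take_append_of_le_length hk]
        exact hbd' k
      · have hk' : (l' ++ [i₀]).length ≤ k := by
          simp only [List.length_append, List.length_singleton]
          omega
        rw [List.take_of_length_le hk']
        have hsum : ((l' ++ [i₀]).map x).sum = ∑ i ∈ B, x i := by
          rw [← List.sum_toFinset _ hnodup, huni]
        rw [hsum]
        exact norm_bound m x hnorm B hP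

end aux

/-- Steinitz's theorem: for any norm on `ℝ^m`
(equivalently, any `m`-dimensional real normed space `E`) and vectors
`x₁, …, x_n` with `∑ xᵢ = 0` and `‖xᵢ‖ ≤ 1`, there is a permutation `π`
such that every partial sum satisfies `‖∑_{i ≤ k} x_{π(i)}‖ ≤ m`. -/
theorem stmt7 (m : ℕ) (E : Type*) [NormedAddCommGroup E] [NormedSpace ℝ E]
    [FiniteDimensional ℝ E] (hdim : Module.finrank ℝ E = m)
    (n : ℕ) (x : Fin n → E)
    (hsum : ∑ i, x i = 0) (hnorm : ∀ i, ‖x i‖ ≤ 1) :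
    ∃ π : Equiv.Perm (Fin n), ∀ k : Fin n,
      ‖∑ i ∈ Finset.univ.filter (fun i : Fin n => i ≤ k), x (π i)‖ ≤ (m : ℝ) := by
  rcases Nat.eq_zero_or_pos n with rfl | hn
  · exact ⟨Equiv.refl _, fun k => k.elim0⟩
  -- initial feasibility
  have hP : (Finset.univ : Finset (Fin n)).card ≤ m ∨ Feas m x Finset.univ := by
    by_cases hnm : n ≤ m
    · left; simpa [Finset.card_univ] using hnm
    · right
      push_neg at hnm
      have hn0 : (0 : ℝ) < (n : ℝ) := by exact_mod_cast hn
      refine ⟨fun _ => ((n : ℝ) - m) / n, fun i _ => ?_, fun i _ => ?_, ?_, ?_⟩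
      · apply div_nonneg _ hn0.le
        have : (m : ℝ) < n := by exact_mod_cast hnm
        linarith
      · rw [div_le_one hn0]; linarith [hn0]
      · rw [Finset.sum_const, Finset.card_univ, Fintype.card_fin, nsmul_eq_mul]
        field_simp
      · rw [← Finset.smul_sum, hsum, smul_zero]
  obtain ⟨l, hnd, htf, hbd⟩ := build_list m hdim x hnorm Finset.univ hP
  have hlen : l.length = n := by
    rw [← List.toFinset_card_of_nodup hnd, htf, Finset.card_univ, Fintype.card_fin]
  set f : Fin n → Fin n := fun i => l.get (Fin.cast hlen.symm i) with hf
  have hinj : Function.Injective f := by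
    intro a b hab
    have := (List.nodup_iff_injective_get.mp hnd) hab
    simpa [Fin.ext_iff] using congrArg Fin.val this
  have hbij : Function.Bijective f := Finite.injective_iff_bijective.mp hinj
  refine ⟨Equiv.ofBijective f hbij, ?_⟩
  intro k
  set G : ℕ → E := fun j => (l.map x).getD j 0 with hG
  have hxf : ∀ i : Fin n, x (f i) = G i.val := by
    intro i
    have hi : i.val < (l.map x).length := by
      rw [List.length_map, hlen]; exact i.isLt
    show x (f i) = (l.map x).getD i.val 0
    rw [List.getD_eq_getElem _ _ hi, List.getElem_map]
    rfl
  have htake : ∀ r, r ≤ n → ((l.take r).map x).sum = ∑ j ∈ Finset.range r, G j := by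
    intro r
    induction r with
    | zero => simp
    | succ r ih =>
      intro hr
      have hr' : r ≤ n := Nat.le_of_succ_le hr
      have hrl : r < (l.map x).length := by rw [List.length_map, hlen]; omega
      rw [Finset.sum_range_succ, ← ih hr', List.map_take, List.sum_take_succ _ r hrl,
        ← List.map_take]
      congr 1
      rw [hG]
      simp only []
      rw [List.getD_eq_getElem _ _ hrl]
  have himg : (Finset.univ.filter (fun i : Fin n => i ≤ k)).image Fin.val
      = Finset.range (k.val + 1) := by
    ext j
    simp only [Finset.mem_image, Finset.mem_filter, Finset.mem_univ, true_and,
      Finset.mem_range]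
    constructor
    · rintro ⟨i, hik, rfl⟩
      exact Nat.lt_succ_of_le hik
    · intro hj
      have hjk : j ≤ k.val := Nat.lt_succ_iff.mp hj
      have hjn : j < n := lt_of_le_of_lt hjk k.isLt
      exact ⟨⟨j, hjn⟩, hjk, rfl⟩
  have hkey : ∑ i ∈ Finset.univ.filter (fun i : Fin n => i ≤ k), x (Equiv.ofBijective f hbij i)
      = ((l.take (k.val + 1)).map x).sum := by
    have h1 : ∑ i ∈ Finset.univ.filter (fun i : Fin n => i ≤ k), x (Equiv.ofBijective f hbij i)
        = ∑ i ∈ Finset.univ.filter (fun i : Fin n => i ≤ k), G i.val := by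
      apply Finset.sum_congr rfl
      intro i _
      rw [Equiv.ofBijective_apply, hxf]
    have h2 : ∑ i ∈ Finset.univ.filter (fun i : Fin n => i ≤ k), G i.val
        = ∑ j ∈ Finset.range (k.val + 1), G j := by
      rw [← himg, Finset.sum_image]
      intro a _ b _ hab
      exact Fin.val_injective hab
    rw [h1, h2, htake (k.val + 1) k.isLt]
  rw [hkey]
  exact hbd (k.val + 1)
end

section
/- Consider the group minimization problem: a finite abelian group 𝒢, elements g₀, g₁, …, g_n ∈ 𝒢, and cost c ∈ ℤⁿ_{≥0}, minimizing cᵀx over {x ∈ ℤⁿ_{≥0} : ∑ᵢ xᵢ gᵢ = g₀}. If the feasible set is nonempty, there exists an optimal solution z* with ‖z*‖₁ ≤ |𝒢| − 1. -/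
private lemma zero_sublist {𝒢 : Type*} [AddCommGroup 𝒢] [Fintype 𝒢] {α : Type*}
    (g : α → 𝒢) (l : List α) (h : Fintype.card 𝒢 ≤ l.length) :
    ∃ t : List α, t.Sublist l ∧ t ≠ [] ∧ (t.map g).sum = 0 := by
  have hcard : Fintype.card 𝒢 < Fintype.card (Fin (l.length + 1)) := by
    simpa using Nat.lt_succ_of_le h
  obtain ⟨a, b, hne, hfe⟩ := Fintype.exists_ne_map_eq_of_card_lt
    (fun k : Fin (l.length + 1) => ((l.take (k : ℕ)).map g).sum) hcard
  have key : ∀ a b : Fin (l.length + 1), (a : ℕ) < (b : ℕ) →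
      ((l.take (a : ℕ)).map g).sum = ((l.take (b : ℕ)).map g).sum →
      ∃ t : List α, t.Sublist l ∧ t ≠ [] ∧ (t.map g).sum = 0 := by
    intro a b hab hfe
    refine ⟨(l.drop (a : ℕ)).take ((b : ℕ) - (a : ℕ)), ?_, ?_, ?_⟩
    · exact (List.take_sublist _ _).trans (List.drop_sublist _ _)
    · have hb : (b : ℕ) ≤ l.length := by omega
      have : ((l.drop (a : ℕ)).take ((b : ℕ) - (a : ℕ))).length = (b : ℕ) - (a : ℕ) := by
        simp [List.length_take, List.length_drop]
        omega
      intro hnil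
      rw [hnil] at this
      simp at this
      omega
    · have hsplit : l.take (b : ℕ) = l.take (a : ℕ) ++ (l.drop (a : ℕ)).take ((b : ℕ) - (a : ℕ)) := by
        rw [← List.take_add]
        congr 1
        omega
      rw [hsplit, List.map_append, List.sum_append] at hfe
      exact (left_eq_add.mp hfe)
  rcases lt_or_gt_of_ne (fun h' : (a : ℕ) = (b : ℕ) => hne (Fin.ext h')) with h1 | h1
  · exact key a b h1 hfe
  · exact key b a h1 hfe.symm

private lemma count_sum_smul {𝒢 : Type*} [AddCommGroup 𝒢] {n : ℕ} (g : Fin n → 𝒢)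
    (t : List (Fin n)) : ∑ i, (t.count i) • g i = (t.map g).sum := by
  induction t with
  | nil => simp
  | cons a t ih =>
    simp only [List.map_cons, List.sum_cons, List.count_cons]
    rw [← ih]
    have : ∀ i : Fin n, (t.count i + if (a == i) = true then 1 else 0) • g i
        = t.count i • g i + (if a = i then g i else 0) := by
      intro i
      rw [add_smul]
      by_cases h : a = i <;> simp [h]
    simp only [this, Finset.sum_add_distrib, Finset.sum_ite_eq Finset.univ a g,
      Finset.mem_univ, if_true]
    exact add_comm _ _

private lemma count_sum_length {n : ℕ} (t : List (Fin n)) : ∑ i, t.count i = t.length := by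
  induction t with
  | nil => simp
  | cons a t ih => simp [List.count_cons, Finset.sum_add_distrib, ih]

private lemma reduce {𝒢 : Type*} [AddCommGroup 𝒢] [Fintype 𝒢] {n : ℕ}
    (g : Fin n → 𝒢) (c : Fin n → ℕ) :
    ∀ N (x : Fin n → ℕ), ∑ i, x i ≤ N →
      ∃ z : Fin n → ℕ, (∑ i, z i • g i = ∑ i, x i • g i) ∧
        (∑ i, c i * z i ≤ ∑ i, c i * x i) ∧ ∑ i, z i ≤ Fintype.card 𝒢 - 1 := by
  intro N
  induction N with
  | zero =>
    intro x hx
    exact ⟨x, rfl, le_rfl, by omega⟩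
  | succ N ih =>
    intro x hx
    by_cases hle : ∑ i, x i ≤ Fintype.card 𝒢 - 1
    · exact ⟨x, rfl, le_rfl, hle⟩
    · have hpos : 0 < Fintype.card 𝒢 := Fintype.card_pos
      have hge : Fintype.card 𝒢 ≤ ∑ i, x i := by omega
      set M : Multiset (Fin n) := ∑ i, Multiset.replicate (x i) i with hM
      have hcount : ∀ j, M.count j = x j := by
        intro j
        rw [hM, Multiset.count_sum']
        rw [Finset.sum_eq_single j]
        · simp
        · intro b _ hbj; simp [Multiset.count_replicate, hbj]
        · simp
      set l := M.toList with hl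
      have hlc : ∀ j, l.count j = x j := by
        intro j
        rw [hl, ← Multiset.coe_count, Multiset.coe_toList, hcount]
      have hlen : l.length = ∑ i, x i := by
        have : l.length = ∑ i, l.count i := (count_sum_length l).symm
        rw [this]
        exact Finset.sum_congr rfl fun i _ => hlc i
      obtain ⟨t, hts, htne, hts0⟩ := zero_sublist g l (by rw [hlen]; exact hge)
      have hyx : ∀ i, t.count i ≤ x i := fun i => (hlc i) ▸ hts.count_le i
      set x' := fun i => x i - t.count i with hx'
      have hx'y : ∀ i, x i = x' i + t.count i := fun i => (Nat.sub_add_cancel (hyx i)).symm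
      have hsum : ∑ i, x' i • g i = ∑ i, x i • g i := by
        have h1 : ∑ i, x i • g i = ∑ i, x' i • g i + ∑ i, (t.count i) • g i := by
          rw [← Finset.sum_add_distrib]
          refine Finset.sum_congr rfl fun i _ => ?_
          rw [← add_smul, ← hx'y]
        rw [h1, count_sum_smul g t, hts0, add_zero]
      have hlt : ∑ i, x' i < ∑ i, x i := by
        have hypos : 0 < ∑ i, t.count i := by
          rw [count_sum_length]
          exact List.length_pos_iff.mpr htne
        have h2 : ∑ i, x i = ∑ i, x' i + ∑ i, t.count i := by
          rw [← Finset.sum_add_distrib]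
          exact Finset.sum_congr rfl fun i _ => hx'y i
        omega
      obtain ⟨z, hz1, hz2, hz3⟩ := ih x' (by omega)
      refine ⟨z, hz1.trans hsum, hz2.trans ?_, hz3⟩
      exact Finset.sum_le_sum fun i _ => Nat.mul_le_mul_left _ (Nat.sub_le _ _)

/-- group minimization problem over a finite abelian group `𝒢`:
minimize `cᵀx` over `{x ∈ ℤⁿ_{≥0} : ∑ᵢ xᵢ gᵢ = g₀}` with `c ≥ 0`.  If the
feasible set is nonempty, there is an optimal solution `z*` with
`‖z*‖₁ ≤ |𝒢| − 1`. -/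
theorem stmt8 (𝒢 : Type*) [AddCommGroup 𝒢] [Fintype 𝒢]
    (n : ℕ) (g₀ : 𝒢) (g : Fin n → 𝒢) (c : Fin n → ℕ)
    (hfeas : ∃ x : Fin n → ℕ, ∑ i, x i • g i = g₀) :
    ∃ z : Fin n → ℕ, (∑ i, z i • g i = g₀) ∧
      (∀ x : Fin n → ℕ, (∑ i, x i • g i = g₀) →
        ∑ i, c i * z i ≤ ∑ i, c i * x i) ∧
      ∑ i, z i ≤ Fintype.card 𝒢 - 1 := by
  obtain ⟨x₀, hx₀⟩ := hfeas
  set S : Set ℕ := {m | ∃ z : Fin n → ℕ, (∑ i, z i • g i = g₀) ∧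
      (∑ i, z i ≤ Fintype.card 𝒢 - 1) ∧ ∑ i, c i * z i = m} with hS
  have hSne : S.Nonempty := by
    obtain ⟨z, hz1, _, hz3⟩ := reduce g c (∑ i, x₀ i) x₀ le_rfl
    exact ⟨∑ i, c i * z i, z, hz1.trans hx₀, hz3, rfl⟩
  obtain ⟨z, hz1, hz2, hz3⟩ := Nat.sInf_mem hSne
  refine ⟨z, hz1, ?_, hz2⟩
  intro x hx
  obtain ⟨z', hz'1, hz'2, hz'3⟩ := reduce g c (∑ i, x i) x le_rfl
  have hmem : ∑ i, c i * z' i ∈ S := ⟨z', hz'1.trans hx, hz'3, rfl⟩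
  calc ∑ i, c i * z i = sInf S := hz3
    _ ≤ ∑ i, c i * z' i := Nat.sInf_le hmem
    _ ≤ ∑ i, c i * x i := hz'2
end

section
/- Gomory's vertex bound: let 𝒢 be a finite abelian group, g₀, g₁, …, g_n ∈ 𝒢, and let P be the convex hull of {x ∈ ℤⁿ_{≥0} : ∑ᵢ xᵢ gᵢ = g₀}. Then every vertex v of P satisfies ∏_{i=1}^{n} (1 + vᵢ) ≤ |𝒢|. -/
/-- Gomory's vertex bound: let `𝒢` be a finite abelian group,
`g₀, g₁, …, g_n ∈ 𝒢`, and `P` the convex hull of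
`{x ∈ ℤⁿ_{≥0} : ∑ᵢ xᵢ gᵢ = g₀}`.  Every vertex (extreme point) `v` of `P`
satisfies `∏ᵢ (1 + vᵢ) ≤ |𝒢|`. -/
theorem stmt9 (𝒢 : Type*) [AddCommGroup 𝒢] [Fintype 𝒢]
    (n : ℕ) (g₀ : 𝒢) (g : Fin n → 𝒢)
    (P : Set (Fin n → ℝ))
    (hP : P = convexHull ℝ {x : Fin n → ℝ | ∃ y : Fin n → ℕ,
        x = (fun i => (y i : ℝ)) ∧ ∑ i, y i • g i = g₀})
    (v : Fin n → ℝ) (hv : v ∈ Set.extremePoints ℝ P) :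
    ∏ i, (1 + v i) ≤ (Fintype.card 𝒢 : ℝ) := by
  subst hP
  obtain ⟨y, hvy, hyg⟩ := extremePoints_convexHull_subset hv
  subst hvy
  by_contra hlt
  push_neg at hlt
  have hlt' : Fintype.card 𝒢 < ∏ i, (y i + 1) := by
    have hc : ((∏ i, (y i + 1) : ℕ) : ℝ) = ∏ i, (1 + (y i : ℝ)) := by
      push_cast; exact Finset.prod_congr rfl fun i _ => by ring
    rw [← Nat.cast_lt (α := ℝ), hc]
    exact hlt
  have hcard : Fintype.card 𝒢 < Fintype.card (∀ i, Fin (y i + 1)) := by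
    rwa [Fintype.card_pi, Finset.prod_congr rfl fun i _ => Fintype.card_fin (y i + 1)]
  obtain ⟨z, z', hzz, hfz⟩ := Fintype.exists_ne_map_eq_of_card_lt
    (fun z : ∀ i, Fin (y i + 1) => ∑ i, (z i : ℕ) • g i) hcard
  
  have hzle : ∀ i, (z i : ℕ) ≤ y i := fun i => Nat.lt_succ_iff.mp (z i).isLt
  have hz'le : ∀ i, (z' i : ℕ) ≤ y i := fun i => Nat.lt_succ_iff.mp (z' i).isLt
  have key : ∀ (w w' : ∀ i, Fin (y i + 1)) (c : Fin n → ℕ),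
      (∑ i, (w i : ℕ) • g i = ∑ i, (w' i : ℕ) • g i) →
      (∀ i, c i + (w i : ℕ) = y i + (w' i : ℕ)) →
      ∑ i, c i • g i = g₀ := by
    intro w w' c hw hc
    have h1 : ∑ i, c i • g i + ∑ i, (w i : ℕ) • g i
        = ∑ i, y i • g i + ∑ i, (w' i : ℕ) • g i := by
      rw [← Finset.sum_add_distrib, ← Finset.sum_add_distrib]
      refine Finset.sum_congr rfl fun i _ => ?_
      rw [← add_smul, ← add_smul, hc i]
    rw [hw, hyg] at h1
    exact add_right_cancel h1
  set a : Fin n → ℕ := fun i => y i - (z i : ℕ) + (z' i : ℕ) with ha_def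
  set b : Fin n → ℕ := fun i => y i - (z' i : ℕ) + (z i : ℕ) with hb_def
  have haS : ∑ i, a i • g i = g₀ :=
    key z z' a hfz fun i => by have := hzle i; simp only [ha_def]; omega
  have hbS : ∑ i, b i • g i = g₀ :=
    key z' z b hfz.symm fun i => by have := hz'le i; simp only [hb_def]; omega
  set A : Fin n → ℝ := fun i => (a i : ℝ) with hA_def
  set B : Fin n → ℝ := fun i => (b i : ℝ) with hB_def
  have hAP : A ∈ convexHull ℝ {x : Fin n → ℝ | ∃ y : Fin n → ℕ,
      x = (fun i => (y i : ℝ)) ∧ ∑ i, y i • g i = g₀} :=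
    subset_convexHull ℝ _ ⟨a, rfl, haS⟩
  have hBP : B ∈ convexHull ℝ {x : Fin n → ℝ | ∃ y : Fin n → ℕ,
      x = (fun i => (y i : ℝ)) ∧ ∑ i, y i • g i = g₀} :=
    subset_convexHull ℝ _ ⟨b, rfl, hbS⟩
  have hmid : (fun i => (y i : ℝ)) ∈ openSegment ℝ A B := by
    refine ⟨1/2, 1/2, by norm_num, by norm_num, by norm_num, ?_⟩
    funext i
    have hab : a i + b i = 2 * y i := by
      have := hzle i; have := hz'le i; simp only [ha_def, hb_def]; omega
    have : (a i : ℝ) + (b i : ℝ) = 2 * (y i : ℝ) := by exact_mod_cast hab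
    simp only [Pi.add_apply, Pi.smul_apply, smul_eq_mul, hA_def, hB_def]
    linarith
  obtain ⟨hAv, hBv⟩ := (mem_extremePoints.mp hv).2 _ hAP _ hBP hmid
  have hAB : A = B := hAv.trans hBv.symm
  apply hzz
  funext i
  have : (a i : ℝ) = (b i : ℝ) := congrFun hAB i
  have hab : a i = b i := by exact_mod_cast this
  have := hzle i; have := hz'le i
  have : (z i : ℕ) = (z' i : ℕ) := by simp only [ha_def, hb_def] at hab; omega
  exact Fin.val_injective this
end

section
/- Let A ∈ ℤ^{m×n}, let B be a nonsingular m×m submatrix of A with δ = |det(B)|, let Δ = Δ(A) be the maximum absolute value of m×m minors of A, and let γ > 0. Then the number of integer points in P = {A x : x ∈ ℝⁿ, ‖x‖₁ ≤ γ} is at most (2γ·Δ/δ + 1)^m · Δ. -/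
open Matrix

lemma mulVec_inj {α : Type*} [CommRing α] [IsDomain α] {m : ℕ}
    (B : Matrix (Fin m) (Fin m) α) (hB : B.det ≠ 0) :
    Function.Injective (fun v : Fin m → α => B *ᵥ v) := by
  intro x y hxy
  have h : ∀ z : Fin m → α, B.adjugate *ᵥ (B *ᵥ z) = B.det • z := fun z => by
    rw [Matrix.mulVec_mulVec, Matrix.adjugate_mul, Matrix.smul_mulVec, Matrix.one_mulVec]
  have h2 : B.det • x = B.det • y := by
    rw [← h x, ← h y]; simp only at hxy; rw [hxy]
  exact smul_right_injective _ hB h2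

lemma card_quotient_eq {m : ℕ} (B : Matrix (Fin m) (Fin m) ℤ) (hB : B.det ≠ 0) :
    Nat.card ((Fin m → ℤ) ⧸ LinearMap.range B.mulVecLin) = B.det.natAbs := by
  classical
  set N := LinearMap.range B.mulVecLin with hN
  have hinj : Function.Injective B.mulVecLin := fun x y h => mulVec_inj B hB (by simpa using h)
  let e0 : (Fin m → ℤ) ≃ₗ[ℤ] N := LinearEquiv.ofInjective B.mulVecLin hinj
  obtain ⟨n, snf⟩ := Submodule.smithNormalForm (Pi.basisFun ℤ (Fin m)) N
  obtain ⟨bM, bN, femb, a, hsnf⟩ := snf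
  have hn : n = m := by
    have h1 : Module.finrank ℤ N = n := by
      rw [Module.finrank_eq_card_basis bN, Fintype.card_fin]
    have h2 : Module.finrank ℤ N = m := by
      rw [← e0.finrank_eq, Module.finrank_pi, Fintype.card_fin]
    omega
  subst hn
  have hfbij : Function.Bijective femb :=
    (Finite.injective_iff_bijective).mp femb.injective
  let e := Equiv.ofBijective femb hfbij
  have he : ∀ i, e i = femb i := fun i => rfl
  have ha : ∀ i, a i ≠ 0 := by
    intro i hai
    apply bN.ne_zero i
    apply Subtype.coe_injective
    show (bN i : Fin n → ℤ) = ((0 : N) : Fin n → ℤ)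
    rw [hsnf i, hai, zero_smul]
    rfl
  -- the submodule map under bM.equivFun
  set I : Fin n → Submodule ℤ ℤ := fun j => Ideal.span {a (e.symm j)} with hI
  have hNspan : N = Submodule.span ℤ (Set.range (fun i => (bN i : Fin n → ℤ))) := by
    conv_lhs => rw [← Submodule.map_subtype_top N, ← bN.span_eq, Submodule.map_span]
    congr 1
    ext v
    simp [Set.range_comp]
  have hesymm : ∀ i, e.symm (femb i) = i := by
    intro i; rw [← he i, Equiv.symm_apply_apply]
  have hg : ∀ i k, bM.equivFun ((bN i : Fin n → ℤ)) k
      = a i * (if femb i = k then 1 else 0) := by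
    intro i k
    rw [hsnf i, _root_.map_smul]
    simp [Module.Basis.equivFun_self, Finsupp.single_apply, mul_ite, mul_one, mul_zero]
  have hmap : Submodule.map (bM.equivFun : (Fin n → ℤ) →ₗ[ℤ] (Fin n → ℤ)) N
      = Submodule.pi Set.univ I := by
    rw [hNspan, Submodule.map_span]
    apply le_antisymm
    · rw [Submodule.span_le]
      rintro v ⟨_, ⟨i, rfl⟩, rfl⟩
      rw [SetLike.mem_coe, Submodule.mem_pi]
      intro j _
      simp only [LinearEquiv.coe_coe]
      rw [hg i j, hI]
      by_cases hj : femb i = j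
      · rw [if_pos hj, mul_one, ← hj]
        show a i ∈ Ideal.span {a (e.symm (femb i))}
        rw [hesymm i]
        exact Ideal.mem_span_singleton_self _
      · rw [if_neg hj, mul_zero]
        exact Submodule.zero_mem _
    · intro x hx
      rw [Submodule.mem_pi] at hx
      have hc : ∀ j, ∃ c : ℤ, c * a (e.symm j) = x j := by
        intro j
        have := hx j (Set.mem_univ j)
        rw [hI] at this
        rwa [Ideal.mem_span_singleton'] at this
      choose c hcspec using hc
      have hxsum : x = ∑ j, c j • (bM.equivFun ((bN (e.symm j) : Fin n → ℤ))) := by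
        funext k
        rw [Finset.sum_apply]
        have : ∀ j, (c j • (bM.equivFun ((bN (e.symm j) : Fin n → ℤ)))) k
            = c j * a (e.symm j) * (if j = k then 1 else 0) := by
          intro j
          rw [Pi.smul_apply, hg (e.symm j) k, smul_eq_mul, ← he (e.symm j),
            Equiv.apply_symm_apply, mul_assoc]
        simp only [this]
        rw [Finset.sum_eq_single k]
        · rw [if_pos rfl, mul_one, hcspec k]
        · intro b _ hb; rw [if_neg hb, mul_zero]
        · intro hk; exact absurd (Finset.mem_univ k) hk
      rw [hxsum]
      apply Submodule.sum_mem
      intro j _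
      apply Submodule.smul_mem
      apply Submodule.subset_span
      exact ⟨(bN (e.symm j) : Fin n → ℤ), ⟨e.symm j, rfl⟩, rfl⟩
  -- cardinality via quotientPi
  have hcard1 : Nat.card ((Fin n → ℤ) ⧸ N) = ∏ j, (a (e.symm j)).natAbs := by
    have q1 : ((Fin n → ℤ) ⧸ N) ≃ₗ[ℤ] ((Fin n → ℤ) ⧸ Submodule.pi Set.univ I) :=
      Submodule.Quotient.equiv N _ (bM.equivFun : (Fin n → ℤ) ≃ₗ[ℤ] (Fin n → ℤ)) hmap
    have q2 := Submodule.quotientPi I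
    rw [Nat.card_congr (q1.toEquiv.trans q2.toEquiv), Nat.card_pi]
    apply Finset.prod_congr rfl
    intro j _
    have : (ℤ ⧸ I j) ≃ ZMod (a (e.symm j)).natAbs := by
      rw [hI]
      exact (Int.quotientSpanEquivZMod (a (e.symm j))).toEquiv
    rw [Nat.card_congr this, Nat.card_zmod]
  -- determinant identity
  let c : Module.Basis (Fin n) ℤ N := (Pi.basisFun ℤ (Fin n)).map e0
  have hc : ∀ j, (c j : Fin n → ℤ) = fun i => B i j := by
    intro j
    show ((e0 ((Pi.basisFun ℤ (Fin n)) j) : N) : Fin n → ℤ) = _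
    rw [LinearEquiv.ofInjective_apply]
    funext i
    simp [Matrix.mulVecLin_apply, Pi.basisFun_apply, Matrix.mulVec_single]
  have hBmat : LinearMap.toMatrix c (Pi.basisFun ℤ (Fin n)) N.subtype = B := by
    ext i j
    rw [LinearMap.toMatrix_apply, Pi.basisFun_repr, Submodule.coe_subtype, hc j]
  set D := LinearMap.toMatrix bN bM N.subtype with hDdef
  have hD : ∀ i j, D i j = if femb j = i then a j else 0 := by
    intro i j
    rw [hDdef, LinearMap.toMatrix_apply, Submodule.coe_subtype, hsnf j, _root_.map_smul]
    simp [Module.Basis.repr_self, Finsupp.single_apply, mul_ite, mul_one, mul_zero]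
  have hDperm : D.submatrix ⇑e id = Matrix.diagonal a := by
    ext i j
    rw [Matrix.submatrix_apply, id, hD (e i) j, Matrix.diagonal_apply]
    by_cases hij : i = j
    · subst hij; rw [if_pos (he i).symm, if_pos rfl]
    · rw [if_neg, if_neg hij]
      rw [← he j]
      exact fun hh => hij (e.injective (hh.symm)) 
  have hDdet : D.det.natAbs = ∏ i, (a i).natAbs := by
    have h1 : (D.submatrix ⇑e id).det = (Equiv.Perm.sign e : ℤ) * D.det :=
      Matrix.det_permute e D
    have h2 : (D.submatrix ⇑e id).det = ∏ i, a i := by rw [hDperm, Matrix.det_diagonal]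
    have h3 : ((Equiv.Perm.sign e : ℤ) * D.det).natAbs = D.det.natAbs := by
      rw [Int.natAbs_mul]
      rcases Int.units_eq_one_or (Equiv.Perm.sign e) with h | h <;> simp [h]
    rw [← h3, ← h1, h2]
    exact map_prod Int.natAbsHom a Finset.univ
  have hchain1 : (Pi.basisFun ℤ (Fin n)).toMatrix ⇑bM * D
      = LinearMap.toMatrix bN (Pi.basisFun ℤ (Fin n)) N.subtype :=
    basis_toMatrix_mul_linearMap_toMatrix bN (Pi.basisFun ℤ (Fin n)) bM N.subtype
  have hchain2 : LinearMap.toMatrix bN (Pi.basisFun ℤ (Fin n)) N.subtype * bN.toMatrix ⇑c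
      = LinearMap.toMatrix c (Pi.basisFun ℤ (Fin n)) N.subtype :=
    linearMap_toMatrix_mul_basis_toMatrix c bN (Pi.basisFun ℤ (Fin n)) N.subtype
  have hBfact : B = (Pi.basisFun ℤ (Fin n)).toMatrix ⇑bM * D * bN.toMatrix ⇑c := by
    rw [← hBmat, ← hchain2, ← hchain1]
  have hunit1 : ((Pi.basisFun ℤ (Fin n)).toMatrix ⇑bM).det.natAbs = 1 := by
    have := Module.Basis.toMatrix_mul_toMatrix_flip (Pi.basisFun ℤ (Fin n)) bM
    have hdet : ((Pi.basisFun ℤ (Fin n)).toMatrix ⇑bM).det * (bM.toMatrix ⇑(Pi.basisFun ℤ (Fin n))).det = 1 := by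
      rw [← Matrix.det_mul, this, Matrix.det_one]
    rcases Int.isUnit_iff.mp (IsUnit.of_mul_eq_one _ hdet) with h | h <;> rw [h] <;> rfl
  have hunit2 : (bN.toMatrix ⇑c).det.natAbs = 1 := by
    have hdet : (bN.toMatrix ⇑c).det * (c.toMatrix ⇑bN).det = 1 := by
      rw [← Matrix.det_mul, Module.Basis.toMatrix_mul_toMatrix_flip, Matrix.det_one]
    rcases Int.isUnit_iff.mp (IsUnit.of_mul_eq_one _ hdet) with h | h <;> rw [h] <;> rfl
  have hdetB : B.det.natAbs = ∏ i, (a i).natAbs := by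
    rw [hBfact, Matrix.det_mul, Matrix.det_mul, Int.natAbs_mul, Int.natAbs_mul,
      hunit1, hunit2, one_mul, mul_one, hDdet]
  rw [hcard1, hdetB]
  exact Fintype.prod_equiv e.symm _ _ (fun j => rfl)

/-- The maximum absolute value of `m × m` (column-selected) minors of an
`m × n` integer matrix. -/
def maxMinorCols {m n : ℕ} (A : Matrix (Fin m) (Fin n) ℤ) : ℕ :=
  Finset.univ.sup (fun f : Fin m → Fin n => ((A.submatrix id f).det).natAbs)

/-- Let `A ∈ ℤ^{m×n}`, `B` a nonsingular `m×m` (column)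
submatrix of `A` with `δ = |det B|`, `Δ = Δ(A)` the maximal absolute value of
`m×m` minors, `γ > 0`.  The number of integer points in
`P = {A x : ‖x‖₁ ≤ γ}` is at most `(2γΔ/δ + 1)^m · Δ`. -/
theorem stmt12 (m n : ℕ) (A : Matrix (Fin m) (Fin n) ℤ)
    (f : Fin m → Fin n) (hf : Function.Injective f)
    (hB : (A.submatrix id f).det ≠ 0)
    (γ : ℝ) (hγ : 0 < γ)
    (P : Set (Fin m → ℤ))
    (hP : P = {y : Fin m → ℤ | ∃ x : Fin n → ℝ, (∑ i, |x i|) ≤ γ ∧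
        ∀ j, (y j : ℝ) = ∑ i, (A j i : ℝ) * x i}) :
    P.Finite ∧ (Nat.card P : ℝ) ≤
      (2 * γ * (maxMinorCols A : ℝ) / (((A.submatrix id f).det.natAbs : ℝ)) + 1) ^ m
        * (maxMinorCols A : ℝ) := by
  classical
  subst hP
  set P : Set (Fin m → ℤ) := {y : Fin m → ℤ | ∃ x : Fin n → ℝ, (∑ i, |x i|) ≤ γ ∧
      ∀ j, (y j : ℝ) = ∑ i, (A j i : ℝ) * x i} with hPdef
  set B : Matrix (Fin m) (Fin m) ℤ := A.submatrix id f with hBdef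
  set Δ : ℕ := maxMinorCols A with hΔdef
  set δ : ℕ := B.det.natAbs with hδdef
  have hδpos : 0 < δ := Int.natAbs_pos.mpr hB
  have hδΔ : δ ≤ Δ := by
    rw [hδdef, hΔdef, hBdef, maxMinorCols]
    exact Finset.le_sup (f := fun g : Fin m → Fin n => ((A.submatrix id g).det).natAbs) (Finset.mem_univ f)
  have hΔpos : 0 < Δ := lt_of_lt_of_le hδpos hδΔ
  set Bρ : Matrix (Fin m) (Fin m) ℝ := (Int.castRingHom ℝ).mapMatrix B with hBρdef
  have hBρdet : Bρ.det = (B.det : ℝ) := by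
    rw [hBρdef, ← RingHom.map_det]; rfl
  have hBρdet0 : Bρ.det ≠ 0 := by rw [hBρdet]; exact_mod_cast hB
  have hBρabs : |Bρ.det| = (δ : ℝ) := by
    rw [hBρdet, hδdef, Nat.cast_natAbs, Int.cast_abs]
  set R : ℝ := γ * Δ / δ with hRdef
  have hRpos : 0 < R := by
    apply div_pos (mul_pos hγ (by exact_mod_cast hΔpos)) (by exact_mod_cast hδpos)
  -- the real vector t y with Bρ *ᵥ t y = cast y
  set yρ : (Fin m → ℤ) → (Fin m → ℝ) := fun y j => (y j : ℝ) with hyρ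
  set t : (Fin m → ℤ) → (Fin m → ℝ) := fun y => (Bρ.det)⁻¹ • Bρ.cramer (yρ y) with htdef
  have ht : ∀ y, Bρ *ᵥ (t y) = yρ y := by
    intro y
    rw [htdef]
    simp only
    rw [Matrix.mulVec_smul, Matrix.mulVec_cramer, smul_smul, inv_mul_cancel₀ hBρdet0, one_smul]
  -- bound on t for members of P
  have htbound : ∀ y ∈ P, ∀ k, |t y k| ≤ R := by
    intro y hy k
    obtain ⟨x, hx1, hx2⟩ := hy
    have hyx : yρ y = ∑ i, x i • (fun j => (A j i : ℝ)) := by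
      funext j
      rw [hyρ]
      simp only [Finset.sum_apply, Pi.smul_apply, smul_eq_mul]
      rw [hx2 j]
      exact Finset.sum_congr rfl (fun i _ => mul_comm _ _)
    have hcl : Bρ.cramer (yρ y) k
        = ∑ i, x i * (Bρ.updateCol k (fun j => (A j i : ℝ))).det := by
      rw [hyx, map_sum]
      rw [Finset.sum_apply]
      apply Finset.sum_congr rfl
      intro i _
      rw [_root_.map_smul, Pi.smul_apply, smul_eq_mul, Matrix.cramer_apply]
    have habs : ∀ i : Fin n, |(Bρ.updateCol k (fun j => (A j i : ℝ))).det| ≤ (Δ : ℝ) := by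
      intro i
      have h1 : Bρ.updateCol k (fun j => (A j i : ℝ))
          = (Int.castRingHom ℝ).mapMatrix (A.submatrix id (Function.update f k i)) := by
        ext p q
        rw [Matrix.updateCol_apply]
        by_cases hq : q = k
        · subst hq
          simp [Matrix.submatrix_apply, Function.update_self]
        · simp [hq, Matrix.submatrix_apply, Function.update_of_ne hq, hBρdef, hBdef]
      have h2 : (A.submatrix id (Function.update f k i)).det.natAbs ≤ Δ := by
        rw [hΔdef, maxMinorCols]
        exact Finset.le_sup (f := fun g : Fin m → Fin n => ((A.submatrix id g).det).natAbs) (Finset.mem_univ _)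
      rw [h1, ← RingHom.map_det]
      calc |((A.submatrix id (Function.update f k i)).det : ℝ)|
          = ((A.submatrix id (Function.update f k i)).det.natAbs : ℝ) := by
            rw [Nat.cast_natAbs, Int.cast_abs]
        _ ≤ (Δ : ℝ) := by exact_mod_cast h2
    have hcb : |Bρ.cramer (yρ y) k| ≤ (Δ : ℝ) * γ := by
      rw [hcl]
      calc |∑ i, x i * (Bρ.updateCol k (fun j => (A j i : ℝ))).det|
          ≤ ∑ i, |x i * (Bρ.updateCol k (fun j => (A j i : ℝ))).det| :=
            Finset.abs_sum_le_sum_abs _ _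
        _ ≤ ∑ i, |x i| * (Δ : ℝ) := by
            apply Finset.sum_le_sum
            intro i _
            rw [abs_mul]
            exact mul_le_mul_of_nonneg_left (habs i) (abs_nonneg _)
        _ = (∑ i, |x i|) * (Δ : ℝ) := by rw [← Finset.sum_mul]
        _ ≤ γ * (Δ : ℝ) := by
            apply mul_le_mul_of_nonneg_right hx1 (by positivity)
        _ = (Δ : ℝ) * γ := mul_comm _ _
    have : |t y k| = |Bρ.det|⁻¹ * |Bρ.cramer (yρ y) k| := by
      rw [htdef]
      simp only [Pi.smul_apply, smul_eq_mul, abs_mul, abs_inv]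
    rw [this, hBρabs]
    calc ((δ:ℝ))⁻¹ * |Bρ.cramer (yρ y) k|
        ≤ ((δ:ℝ))⁻¹ * ((Δ:ℝ) * γ) := by
          apply mul_le_mul_of_nonneg_left hcb (by positivity)
      _ = R := by rw [hRdef]; ring
  -- quotient by the lattice B ℤ^m
  set N : Submodule ℤ (Fin m → ℤ) := LinearMap.range B.mulVecLin with hNdef
  have hQcard : Nat.card ((Fin m → ℤ) ⧸ N) = δ := card_quotient_eq B hB
  have hQfin : Finite ((Fin m → ℤ) ⧸ N) := Nat.finite_of_card_ne_zero (by omega)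
  set π : (Fin m → ℤ) →ₗ[ℤ] (Fin m → ℤ) ⧸ N := N.mkQ with hπdef
  set y0 : ((Fin m → ℤ) ⧸ N) → (Fin m → ℤ) :=
    fun q => if h : ∃ y, y ∈ P ∧ π y = q then h.choose else 0 with hy0def
  have hy0 : ∀ y ∈ P, y0 (π y) ∈ P ∧ π (y0 (π y)) = π y := by
    intro y hy
    have h : ∃ z, z ∈ P ∧ π z = π y := ⟨y, hy, rfl⟩
    rw [hy0def]
    simp only [dif_pos h]
    exact h.choose_spec
  have hs : ∀ y, y ∈ P → ∃ s : Fin m → ℤ, B *ᵥ s = y - y0 (π y) := by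
    intro y hy
    have hmem : y - y0 (π y) ∈ N := by
      rw [← Submodule.Quotient.eq]
      exact ((hy0 y hy).2).symm
    obtain ⟨s, hseq⟩ := LinearMap.mem_range.mp hmem
    exact ⟨s, by rw [← Matrix.mulVecLin_apply]; exact hseq⟩
  -- the integer shift equals the difference of the t-vectors
  have hkey : ∀ y (hy : y ∈ P) (k : Fin m),
      (((hs y hy).choose k : ℝ)) = t y k - t (y0 (π y)) k := by
    intro y hy k
    have hseq : B *ᵥ (hs y hy).choose = y - y0 (π y) := (hs y hy).choose_spec
    have hBji : ∀ j i, Bρ j i = (B j i : ℝ) := fun j i => rfl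
    have hcast : Bρ *ᵥ (fun i => ((hs y hy).choose i : ℝ)) = Bρ *ᵥ (t y - t (y0 (π y))) := by
      have h1 : ∀ j, (Bρ *ᵥ (fun i => ((hs y hy).choose i : ℝ))) j = (((B *ᵥ (hs y hy).choose) j : ℤ) : ℝ) := by
        intro j
        simp only [Matrix.mulVec, dotProduct, hBji]
        push_cast
        rfl
      have h2 : Bρ *ᵥ (t y - t (y0 (π y))) = yρ y - yρ (y0 (π y)) := by
        rw [Matrix.mulVec_sub, ht y, ht (y0 (π y))]
      funext j
      rw [h1 j, hseq, h2]
      simp only [Pi.sub_apply, hyρ]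
      push_cast
      rfl
    have heqv := mulVec_inj Bρ hBρdet0 hcast
    have := congrFun heqv k
    rw [this, Pi.sub_apply]
  -- the box
  set M0 : ℤ := ⌊2 * R⌋ with hM0def
  have hM0nn : 0 ≤ M0 := Int.le_floor.mpr (by push_cast; linarith)
  have hΦmem : ∀ y (hy : y ∈ P) (k : Fin m),
      (hs y hy).choose k - ⌈-R - t (y0 (π y)) k⌉ ∈ Finset.Icc (0:ℤ) M0 := by
    intro y hy k
    rw [Finset.mem_Icc]
    have hk := hkey y hy k
    have habs1 := abs_le.mp (htbound y hy k)
    constructor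
    · have hle : (-R - t (y0 (π y)) k) ≤ (((hs y hy).choose k : ℝ)) := by
        rw [hk]; linarith [habs1.1]
      have := Int.ceil_le.mpr hle
      omega
    · have h1 : (((hs y hy).choose k : ℝ)) ≤ R - t (y0 (π y)) k := by
        rw [hk]; linarith [habs1.2]
      have h2 : (hs y hy).choose k ≤ ⌊R - t (y0 (π y)) k⌋ := Int.le_floor.mpr h1
      have h3 : ⌊R - t (y0 (π y)) k⌋ - ⌈-R - t (y0 (π y)) k⌉ ≤ M0 := by
        rw [hM0def]
        apply Int.le_floor.mpr
        push_cast
        have hf := Int.floor_le (R - t (y0 (π y)) k)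
        have hc := Int.le_ceil (-R - t (y0 (π y)) k)
        linarith
      omega
  set T := (((Fin m → ℤ) ⧸ N) × (Fin m → {z : ℤ // z ∈ Finset.Icc (0:ℤ) M0})) with hTdef
  set Φ : ↥P → T := fun yp =>
    ⟨π yp.1, fun k => ⟨(hs yp.1 yp.2).choose k - ⌈-R - t (y0 (π yp.1)) k⌉,
      hΦmem yp.1 yp.2 k⟩⟩ with hΦdef
  have hΦinj : Function.Injective Φ := by
    rintro ⟨y, hy⟩ ⟨y', hy'⟩ heq
    have hq : π y = π y' := congrArg Prod.fst heq
    have hsnd := congrArg Prod.snd heq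
    simp only [hΦdef] at hsnd
    have hss : (hs y hy).choose = (hs y' hy').choose := by
      funext k
      have h4 := congrFun hsnd k
      rw [Subtype.ext_iff] at h4
      simp only at h4
      have hc : (⌈-R - t (y0 (π y)) k⌉ : ℤ) = ⌈-R - t (y0 (π y')) k⌉ :=
        congrArg (fun q => ⌈-R - t (y0 q) k⌉) hq
      omega
    have e1 := (hs y hy).choose_spec
    have e2 := (hs y' hy').choose_spec
    rw [hss] at e1
    apply Subtype.ext
    have h5 : y - y0 (π y) = y' - y0 (π y') := e1.symm.trans e2
    have h6 : y0 (π y) = y0 (π y') := congrArg y0 hq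
    rw [h6] at h5
    exact sub_left_inj.mp h5
  have hPfinite : Finite ↥P := Finite.of_injective Φ hΦinj
  have hPfin : P.Finite := Set.finite_coe_iff.mp hPfinite
  refine ⟨hPfin, ?_⟩
  have hIcc : Nat.card {z : ℤ // z ∈ Finset.Icc (0:ℤ) M0} = M0.toNat + 1 := by
    rw [Nat.card_eq_fintype_card, Fintype.card_coe, Int.card_Icc]
    omega
  have hTcard : Nat.card T = δ * (M0.toNat + 1) ^ m := by
    rw [hTdef, Nat.card_prod, hQcard, Nat.card_pi]
    congr 1
    simp only [hIcc]
    rw [Finset.prod_const, Finset.card_univ, Fintype.card_fin]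
  have hcardle : Nat.card ↥P ≤ δ * (M0.toNat + 1) ^ m := by
    rw [← hTcard]
    exact Nat.card_le_card_of_injective Φ hΦinj
  have hM0le : ((M0.toNat : ℝ) + 1) ≤ 2 * R + 1 := by
    have h1 : ((M0 : ℤ) : ℝ) ≤ 2 * R := by rw [hM0def]; exact Int.floor_le _
    have h2 : ((M0.toNat : ℕ) : ℤ) = M0 := Int.toNat_of_nonneg hM0nn
    have h3 : ((M0.toNat : ℕ) : ℝ) ≤ 2 * R := by
      rw [← h2] at h1
      exact_mod_cast h1
    linarith
  calc (Nat.card ↥P : ℝ) ≤ (δ : ℝ) * ((M0.toNat : ℝ) + 1) ^ m := by exact_mod_cast hcardle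
    _ ≤ (δ : ℝ) * (2 * R + 1) ^ m := by
        apply mul_le_mul_of_nonneg_left _ (by positivity)
        apply pow_le_pow_left₀ (by positivity) hM0le
    _ ≤ (Δ : ℝ) * (2 * R + 1) ^ m := by
        apply mul_le_mul_of_nonneg_right _ (by positivity)
        exact_mod_cast hδΔ
    _ = (2 * γ * (Δ:ℝ) / ((δ:ℕ):ℝ) + 1) ^ m * (Δ : ℝ) := by rw [hRdef]; ring
end

section
/- Let A ∈ ℤ^{m×n} with Δ = Δ(A) the maximum absolute value of m×m minors (assume rank(A) = m), and let γ > 0. Then |{A x : x ∈ ℝⁿ, ‖x‖₁ ≤ γ} ∩ ℤ^m| ≤ (2γ + 1)^m · Δ. -/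
open Matrix

section Aux


lemma mulVecLin_injective_of_det_ne_zero {m : ℕ} {B : Matrix (Fin m) (Fin m) ℤ}
    (hd : B.det ≠ 0) : Function.Injective B.mulVecLin := by
  rw [← LinearMap.ker_eq_bot, LinearMap.ker_eq_bot']
  intro w hw
  have h1 : B.adjugate *ᵥ (B *ᵥ w) = B.det • w := by
    rw [Matrix.mulVec_mulVec, Matrix.adjugate_mul, Matrix.smul_mulVec, Matrix.one_mulVec]
  rw [show B *ᵥ w = 0 from hw, Matrix.mulVec_zero] at h1
  have := h1.symm
  rwa [smul_eq_zero, or_iff_right hd] at this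

lemma index_range_mulVecLin {m : ℕ} (B : Matrix (Fin m) (Fin m) ℤ)
    (hd : B.det ≠ 0) :
    (LinearMap.range B.mulVecLin).toAddSubgroup.index = B.det.natAbs := by
  classical
  set L : Submodule ℤ (Fin m → ℤ) := LinearMap.range B.mulVecLin with hL
  have hinj : Function.Injective B.mulVecLin := mulVecLin_injective_of_det_ne_zero hd
  let e₁ : (Fin m → ℤ) ≃ₗ[ℤ] L := LinearEquiv.ofInjective B.mulVecLin hinj
  obtain ⟨k, snf⟩ := L.smithNormalForm (Pi.basisFun ℤ (Fin m))
  have hkm : k = m := by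
    have h1 : Module.finrank ℤ L = k := Module.finrank_eq_card_basis snf.bN |>.trans (by simp)
    have h2 : Module.finrank ℤ L = m := by
      rw [← e₁.finrank_eq]; simp
    omega
  subst hkm
  -- the permutation
  have hbij : Function.Bijective snf.f := by
    exact Finite.injective_iff_bijective.mp snf.f.injective
  let σ : Fin k ≃ Fin k := Equiv.ofBijective snf.f hbij
  -- basis of L indexed by Fin k matching positions
  let bL : Module.Basis (Fin k) ℤ L := snf.bN.reindex σ
  have hbL : ∀ j, (bL j : Fin k → ℤ) = snf.a (σ.symm j) • snf.bM j := by
    intro j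
    simp only [bL, Module.Basis.reindex_apply]
    rw [snf.snf (σ.symm j), show snf.f (σ.symm j) = j from σ.apply_symm_apply j]
  -- index via snf
  have hidx : L.toAddSubgroup.index = ∏ i : Fin k, (snf.a i).natAbs := by
    rw [snf.toAddSubgroup_index_eq_ite]
    simp only [Fintype.card_fin, if_true]
    refine Finset.prod_congr rfl fun i _ => ?_
    rw [Ideal.span_singleton_toAddSubgroup_eq_zmultiples, Int.index_zmultiples]
  -- determinant side
  let e₂ : (Fin k → ℤ) ≃ₗ[ℤ] L := snf.bM.equiv bL (Equiv.refl _)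
  have hdet1 : LinearMap.det (L.subtype ∘ₗ (e₁ : (Fin k → ℤ) →ₗ[ℤ] L)) = B.det := by
    have : L.subtype ∘ₗ (e₁ : (Fin k → ℤ) →ₗ[ℤ] L) = B.mulVecLin := by
      ext v j
      simp only [LinearMap.coe_comp, Function.comp_apply, LinearEquiv.coe_coe,
        Submodule.coe_subtype, e₁]
      exact congrFun (LinearEquiv.ofInjective_apply B.mulVecLin _) j
    rw [this]
    have : B.mulVecLin = Matrix.toLin' B := by
      ext v j
      simp [Matrix.toLin'_apply, Matrix.mulVecLin_apply]
    rw [this, LinearMap.det_toLin']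
  have hdet2 : (LinearMap.det (L.subtype ∘ₗ (e₂ : (Fin k → ℤ) →ₗ[ℤ] L))).natAbs
      = ∏ i : Fin k, (snf.a i).natAbs := by
    rw [← LinearMap.det_toMatrix snf.bM]
    have hmat : LinearMap.toMatrix snf.bM snf.bM (L.subtype ∘ₗ (e₂ : (Fin k → ℤ) →ₗ[ℤ] L))
        = Matrix.diagonal (fun j => snf.a (σ.symm j)) := by
      ext r j
      rw [LinearMap.toMatrix_apply]
      simp only [LinearMap.coe_comp, Function.comp_apply, LinearEquiv.coe_coe]
      rw [show e₂ (snf.bM j) = bL j from by simpa [e₂] using snf.bM.equiv_apply j bL (Equiv.refl _)]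
      rw [show (L.subtype) (bL j) = (bL j : Fin k → ℤ) from rfl, hbL j]
      rw [_root_.map_smul, Module.Basis.repr_self]
      by_cases h : r = j
      · subst h; simp [Matrix.diagonal]
      · simp [Matrix.diagonal, h, Finsupp.single_apply, Ne.symm h]
    rw [hmat, Matrix.det_diagonal]
    rw [show (∏ j, snf.a (σ.symm j)).natAbs = ∏ j, (snf.a (σ.symm j)).natAbs from
      map_prod Int.natAbsHom _ _]
    exact Equiv.prod_comp σ.symm (fun i => (snf.a i).natAbs)
  have hassoc := LinearMap.associated_det_comp_equiv L.subtype e₁ e₂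
  have := Int.natAbs_eq_iff_associated.mpr hassoc
  rw [hdet1] at this
  rw [hidx, ← hdet2, ← this]



lemma exists_minor_ne_zero {m n : ℕ} (A : Matrix (Fin m) (Fin n) ℤ) (hA : A.rank = m) :
    ∃ f : Fin m → Fin n, (A.submatrix id f).det ≠ 0 := by
  classical
  set L : Submodule ℤ (Fin m → ℤ) := LinearMap.range A.mulVecLin with hLdef
  have hfr : Module.finrank ℤ L = m := hA
  -- basis of L with m elements
  let v : Module.Basis (Module.Free.ChooseBasisIndex ℤ L) ℤ L := Module.Free.chooseBasis ℤ L
  have hcard : Fintype.card (Module.Free.ChooseBasisIndex ℤ L) = m := by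
    rw [← Module.finrank_eq_card_chooseBasisIndex, hfr]
  let e0 : Module.Free.ChooseBasisIndex ℤ L ≃ Fin m := Fintype.equivFinOfCardEq hcard
  let w : Module.Basis (Fin m) ℤ L := v.reindex e0
  -- cast linear map to ℚ^m
  let π : (Fin m → ℤ) →ₗ[ℤ] (Fin m → ℚ) :=
    { toFun := fun t j => ((t j : ℤ) : ℚ)
      map_add' := by intro a b; funext j; simp
      map_smul' := by intro c a; funext j; simp }
  have hπinj : LinearMap.ker π = ⊥ := by
    rw [LinearMap.ker_eq_bot']
    intro t ht
    funext j
    have := congrFun ht j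
    simpa [π] using this
  -- the casted basis vectors
  let u : Fin m → (Fin m → ℚ) := fun i => π ((w i : Fin m → ℤ))
  have hindZ : LinearIndependent ℤ u := by
    have h1 : LinearIndependent ℤ (fun i => ((w i : Fin m → ℤ))) :=
      w.linearIndependent.map' L.subtype (Submodule.ker_subtype L)
    exact h1.map' π hπinj
  have hindQ : LinearIndependent ℚ u := (LinearIndependent.iff_fractionRing ℤ ℚ).mp hindZ
  -- u spans ℚ^m
  have hspan : Submodule.span ℚ (Set.range u) = ⊤ := by
    rcases Nat.eq_zero_or_pos m with hm | hm
    · subst hm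
      apply Submodule.eq_top_of_finrank_eq
      simp [Module.finrank_pi]
    · have : Nonempty (Fin m) := ⟨⟨0, hm⟩⟩
      exact hindQ.span_eq_top_of_card_eq_finrank (by simp [Module.finrank_pi])
  -- each u i is in range of A' mulVecLin, A' := casted A
  let A' : Matrix (Fin m) (Fin n) ℚ := A.map (fun t => (t : ℚ))
  have hui : ∀ i, u i ∈ LinearMap.range A'.mulVecLin := by
    intro i
    obtain ⟨x, hx⟩ := (w i).2
    refine ⟨fun k => ((x k : ℤ) : ℚ), ?_⟩
    funext j
    have : A.mulVecLin x = (w i : Fin m → ℤ) := hx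
    have hj := congrFun this j
    simp only [Matrix.mulVecLin_apply, Matrix.mulVec, dotProduct] at hj ⊢
    simp only [u, π, LinearMap.coe_mk, AddHom.coe_mk, ← hj]
    push_cast
    rfl
  have hrange : LinearMap.range A'.mulVecLin = ⊤ := by
    rw [eq_top_iff, ← hspan, Submodule.span_le]
    rintro _ ⟨i, rfl⟩
    exact hui i
  -- columns of A' span ℚ^m
  have hcolspan : Submodule.span ℚ (Set.range A'ᵀ) = ⊤ := by
    rw [← show LinearMap.range A'.mulVecLin = Submodule.span ℚ (Set.range A'ᵀ) from Matrix.range_mulVecLin A']; exact hrange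
  -- extract m linearly independent columns
  obtain ⟨b, hbsub, hbspan, hbind⟩ := exists_linearIndependent ℚ (Set.range A'ᵀ)
  rw [hcolspan] at hbspan
  have hbfin : b.Finite := by
    have : Set.Finite (Set.range A'ᵀ) := Set.finite_range _
    exact this.subset hbsub
  haveI := hbfin.fintype
  have hbcard : Fintype.card b = m := by
    let bb : Module.Basis b ℚ (Fin m → ℚ) := Module.Basis.mk hbind (by rw [Subtype.range_coe, hbspan])
    have := Module.finrank_eq_card_basis bb
    simp [Module.finrank_pi] at this
    rw [← Nat.card_coe_set_eq, Nat.card_eq_fintype_card] at this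
    omega
  let eb : Fin m ≃ b := (Fintype.equivFinOfCardEq hbcard).symm
  have hsel : ∀ y : b, ∃ k : Fin n, A'ᵀ k = (y : Fin m → ℚ) := fun y => hbsub y.2
  choose g hg using hsel
  refine ⟨fun i => g (eb i), ?_⟩
  -- determinant over ℚ of the selected submatrix is nonzero
  have hindcols : LinearIndependent ℚ (fun i : Fin m => (A'.submatrix id (fun i => g (eb i)))ᵀ i) := by
    have : (fun i : Fin m => (A'.submatrix id (fun i => g (eb i)))ᵀ i)
        = (fun i : Fin m => ((eb i : Fin m → ℚ))) := by
      funext i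
      have := hg (eb i)
      funext j
      exact congrFun this j
    rw [this]
    exact hbind.comp eb eb.injective
  have hunit : IsUnit (A'.submatrix id (fun i => g (eb i))) :=
    Matrix.linearIndependent_cols_iff_isUnit.mp hindcols
  have hdet' : (A'.submatrix id (fun i => g (eb i))).det ≠ 0 := by
    intro h
    have hud := (Matrix.isUnit_iff_isUnit_det _).mp hunit
    rw [h] at hud
    exact (not_isUnit_zero : ¬ IsUnit (0 : ℚ)) hud
  intro h
  apply hdet'
  have : (A'.submatrix id (fun i => g (eb i))) = ((A.submatrix id (fun i => g (eb i))).map (fun t => (t : ℚ))) := by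
    ext r c; rfl
  rw [this, show (A.submatrix id (fun i => g (eb i))).map (fun t => (t : ℚ))
      = (Int.castRingHom ℚ).mapMatrix (A.submatrix id (fun i => g (eb i))) from rfl,
    ← RingHom.map_det, show (A.submatrix id (fun i => g (eb i))).det = 0 from h]
  simp


end Aux

/-- Let `A ∈ ℤ^{m×n}` with `rank A = m`, `Δ = Δ(A)` the maximum
absolute value of `m×m` minors, and `γ > 0`.  Then
`|{A x : ‖x‖₁ ≤ γ} ∩ ℤ^m| ≤ (2γ + 1)^m · Δ`. -/
theorem stmt13 (m n : ℕ) (A : Matrix (Fin m) (Fin n) ℤ) (hA : A.rank = m)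
    (γ : ℝ) (hγ : 0 < γ)
    (P : Set (Fin m → ℤ))
    (hP : P = {y : Fin m → ℤ | ∃ x : Fin n → ℝ, (∑ i, |x i|) ≤ γ ∧
        ∀ j, (y j : ℝ) = ∑ i, (A j i : ℝ) * x i}) :
    P.Finite ∧ (Nat.card P : ℝ) ≤ (2 * γ + 1) ^ m * (maxMinorCols A : ℝ) := by
  classical
  obtain ⟨f₁, hf₁⟩ := exists_minor_ne_zero A hA
  have hne : Nonempty (Fin m → Fin n) := ⟨f₁⟩
  obtain ⟨f₀, -, hf₀⟩ := Finset.exists_mem_eq_sup (Finset.univ : Finset (Fin m → Fin n))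
      Finset.univ_nonempty (fun f => ((A.submatrix id f).det).natAbs)
  set Δ : ℕ := maxMinorCols A with hΔdef
  set B : Matrix (Fin m) (Fin m) ℤ := A.submatrix id f₀ with hBdef
  have hBΔ : B.det.natAbs = Δ := hf₀.symm
  have hΔ1 : 1 ≤ Δ := by
    have h1 : 0 < ((A.submatrix id f₁).det).natAbs := Int.natAbs_pos.mpr hf₁
    have h2 : ((A.submatrix id f₁).det).natAbs ≤ Δ :=
      Finset.le_sup (f := fun f : Fin m → Fin n => ((A.submatrix id f).det).natAbs)
        (Finset.mem_univ f₁)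
    omega
  have hd : B.det ≠ 0 := by
    intro h
    rw [h] at hBΔ
    simp at hBΔ
    omega
  -- bound on entries of adjugate B * A
  have hentry : ∀ j k, ((B.adjugate * A) j k).natAbs ≤ Δ := by
    intro j k
    have h2 : (B.adjugate * A) j k = (B.adjugate *ᵥ (fun r => A r k)) j := by
      simp [Matrix.mul_apply, Matrix.mulVec, dotProduct]
    have h1 : (B.adjugate * A) j k = (B.updateCol j (fun r => A r k)).det := by
      rw [h2, ← Matrix.cramer_eq_adjugate_mulVec, Matrix.cramer_apply]
    have h3 : B.updateCol j (fun r => A r k) = A.submatrix id (Function.update f₀ j k) := by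
      ext r i
      by_cases hij : i = j
      · subst hij; simp [Matrix.updateCol_apply, Function.update_apply]
      · simp [Matrix.updateCol_apply, hij, Function.update_apply, hBdef]
    rw [h1, h3]
    exact Finset.le_sup (f := fun f : Fin m → Fin n => ((A.submatrix id f).det).natAbs)
      (Finset.mem_univ _)
  -- the lattice
  set L : Submodule ℤ (Fin m → ℤ) := LinearMap.range B.mulVecLin with hLdef
  have hQcard : Nat.card ((Fin m → ℤ) ⧸ L) = Δ := by
    have h := index_range_mulVecLin B hd
    rw [hBΔ] at h
    exact h
  haveI hQfin : Finite ((Fin m → ℤ) ⧸ L) := by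
    have hpos : 0 < Nat.card ((Fin m → ℤ) ⧸ L) := by omega
    exact (Nat.card_pos_iff.mp hpos).2
  -- analytic bound on z = adjugate B * y
  have hzbound : ∀ y : Fin m → ℤ,
      y ∈ {y : Fin m → ℤ | ∃ x : Fin n → ℝ, (∑ i, |x i|) ≤ γ ∧
        ∀ j, (y j : ℝ) = ∑ i, (A j i : ℝ) * x i} →
      ∀ j, |(((B.adjugate *ᵥ y) j : ℤ) : ℝ)| ≤ γ * Δ := by
    rintro y ⟨x, hx1, hx2⟩ j
    have hcast : (((B.adjugate *ᵥ y) j : ℤ) : ℝ) = ∑ k, (((B.adjugate * A) j k : ℤ) : ℝ) * x k := by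
      have e1 : (((B.adjugate *ᵥ y) j : ℤ) : ℝ) = ∑ r, ((B.adjugate j r : ℤ) : ℝ) * (y r : ℝ) := by
        simp [Matrix.mulVec, dotProduct]
      rw [e1]
      calc ∑ r, ((B.adjugate j r : ℤ) : ℝ) * (y r : ℝ)
          = ∑ r, ((B.adjugate j r : ℤ) : ℝ) * ∑ k, (A r k : ℝ) * x k := by
            exact Finset.sum_congr rfl fun r _ => by rw [hx2 r]
        _ = ∑ r, ∑ k, ((B.adjugate j r : ℤ) : ℝ) * ((A r k : ℝ) * x k) := by
            exact Finset.sum_congr rfl fun r _ => Finset.mul_sum _ _ _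
        _ = ∑ k, ∑ r, ((B.adjugate j r : ℤ) : ℝ) * ((A r k : ℝ) * x k) := Finset.sum_comm
        _ = ∑ k, (∑ r, ((B.adjugate j r : ℤ) : ℝ) * (A r k : ℝ)) * x k := by
            refine Finset.sum_congr rfl fun k _ => ?_
            rw [Finset.sum_mul]
            exact Finset.sum_congr rfl fun r _ => by ring
        _ = ∑ k, (((B.adjugate * A) j k : ℤ) : ℝ) * x k := by
            refine Finset.sum_congr rfl fun k _ => ?_
            congr 1
            rw [Matrix.mul_apply]
            push_cast
            rfl
    rw [hcast]
    calc |∑ k, (((B.adjugate * A) j k : ℤ) : ℝ) * x k|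
        ≤ ∑ k, |(((B.adjugate * A) j k : ℤ) : ℝ) * x k| := Finset.abs_sum_le_sum_abs _ _
      _ ≤ ∑ k, (Δ : ℝ) * |x k| := by
          refine Finset.sum_le_sum fun k _ => ?_
          rw [abs_mul]
          refine mul_le_mul_of_nonneg_right ?_ (abs_nonneg _)
          rw [← Int.cast_abs]
          have := hentry j k
          have h5 : |(B.adjugate * A) j k| ≤ (Δ : ℤ) := by
            rw [Int.abs_eq_natAbs]
            exact_mod_cast this
          exact_mod_cast h5
      _ = (Δ : ℝ) * ∑ k, |x k| := by rw [Finset.mul_sum]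
      _ ≤ (Δ : ℝ) * γ := by
          refine mul_le_mul_of_nonneg_left hx1 (by positivity)
      _ = γ * Δ := mul_comm _ _
  -- representatives
  let rep : ((Fin m → ℤ) ⧸ L) → (Fin m → ℤ) :=
    Function.surjInv (Submodule.Quotient.mk_surjective L)
  have hrep : ∀ q, (Submodule.Quotient.mk (rep q) : (Fin m → ℤ) ⧸ L) = q :=
    fun q => Function.surjInv_eq _ q
  have hyL : ∀ y : Fin m → ℤ, ∃ w : Fin m → ℤ,
      B *ᵥ w = y - rep (Submodule.Quotient.mk y) := by
    intro y
    have hmem : y - rep (Submodule.Quotient.mk y) ∈ L := by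
      rw [← Submodule.Quotient.eq L]
      exact (hrep (Submodule.Quotient.mk y)).symm
    obtain ⟨x, hx⟩ := hmem
    exact ⟨x, hx⟩
  choose w hw using hyL
  -- real center
  let c : ((Fin m → ℤ) ⧸ L) → Fin m → ℝ :=
    fun q j => -(((B.adjugate *ᵥ rep q) j : ℤ) : ℝ) / ((B.det : ℤ) : ℝ)
  have habsd : |((B.det : ℤ) : ℝ)| = (Δ : ℝ) := by
    rw [← Int.cast_abs, Int.abs_eq_natAbs, hBΔ]
    push_cast
    rfl
  have hdR : ((B.det : ℤ) : ℝ) ≠ 0 := by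
    intro h
    rw [show ((B.det : ℤ) : ℝ) = 0 ↔ B.det = 0 from Int.cast_eq_zero] at h
    exact hd h
  -- box bound for w
  have hwbox : ∀ y : Fin m → ℤ,
      y ∈ {y : Fin m → ℤ | ∃ x : Fin n → ℝ, (∑ i, |x i|) ≤ γ ∧
        ∀ j, (y j : ℝ) = ∑ i, (A j i : ℝ) * x i} →
      ∀ j, c (Submodule.Quotient.mk y) j - γ ≤ (w y j : ℝ) ∧
           (w y j : ℝ) ≤ c (Submodule.Quotient.mk y) j + γ := by
    intro y hy j
    set q := (Submodule.Quotient.mk y : (Fin m → ℤ) ⧸ L) with hq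
    have hdz : (B.det) * (w y j) = (B.adjugate *ᵥ y) j - (B.adjugate *ᵥ rep q) j := by
      have h1 : B.adjugate *ᵥ (B *ᵥ w y) = B.det • w y := by
        rw [Matrix.mulVec_mulVec, Matrix.adjugate_mul, Matrix.smul_mulVec,
          Matrix.one_mulVec]
      have h2 : B.adjugate *ᵥ (y - rep q) = B.adjugate *ᵥ y - B.adjugate *ᵥ rep q :=
        Matrix.mulVec_sub _ _ _
      rw [hw y, ← hq, h2] at h1
      have h3 := congrFun h1 j
      simpa using h3.symm
    have hcast : ((B.det : ℤ) : ℝ) * (w y j : ℝ)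
        = (((B.adjugate *ᵥ y) j : ℤ) : ℝ) - (((B.adjugate *ᵥ rep q) j : ℤ) : ℝ) := by
      exact_mod_cast congrArg (fun t : ℤ => (t : ℝ)) hdz
    have hzj := hzbound y hy j
    have hcj : (w y j : ℝ) - c q j = (((B.adjugate *ᵥ y) j : ℤ) : ℝ) / ((B.det : ℤ) : ℝ) := by
      simp only [c]
      field_simp
      linarith [hcast]
    have habs : |(w y j : ℝ) - c q j| ≤ γ := by
      rw [hcj, abs_div, habsd, div_le_iff₀ (by exact_mod_cast Nat.pos_of_ne_zero (by omega))]
      exact hzj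
    have := abs_le.mp habs
    constructor <;> linarith [this.1, this.2]
  -- the injection
  set K : ℤ := ⌊2 * γ⌋ with hKdef
  have hK0 : 0 ≤ K := Int.floor_nonneg.mpr (by linarith)
  let T := ((Fin m → ℤ) ⧸ L) × (Fin m → (Finset.Icc (0:ℤ) K : Finset ℤ))
  have hmemIcc : ∀ y : Fin m → ℤ,
      y ∈ {y : Fin m → ℤ | ∃ x : Fin n → ℝ, (∑ i, |x i|) ≤ γ ∧
        ∀ j, (y j : ℝ) = ∑ i, (A j i : ℝ) * x i} → ∀ j,
      w y j - ⌈c (Submodule.Quotient.mk y) j - γ⌉ ∈ Finset.Icc (0:ℤ) K := by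
    intro y hy j
    obtain ⟨hlo, hhi⟩ := hwbox y hy j
    rw [Finset.mem_Icc]
    constructor
    · have : ⌈c (Submodule.Quotient.mk y) j - γ⌉ ≤ w y j := Int.ceil_le.mpr (by
        push_cast; linarith)
      omega
    · rw [hKdef]
      refine Int.le_floor.mpr ?_
      push_cast
      have := Int.le_ceil (c (Submodule.Quotient.mk y) j - γ)
      linarith
  let Φ : {y : Fin m → ℤ | ∃ x : Fin n → ℝ, (∑ i, |x i|) ≤ γ ∧
        ∀ j, (y j : ℝ) = ∑ i, (A j i : ℝ) * x i} → T := fun yp =>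
    ⟨Submodule.Quotient.mk yp.1, fun j =>
      ⟨w yp.1 j - ⌈c (Submodule.Quotient.mk yp.1) j - γ⌉, hmemIcc yp.1 yp.2 j⟩⟩
  have hΦinj : Function.Injective Φ := by
    rintro ⟨y₁, h₁⟩ ⟨y₂, h₂⟩ heq
    have hq : (Submodule.Quotient.mk y₁ : (Fin m → ℤ) ⧸ L) = Submodule.Quotient.mk y₂ :=
      congrArg Prod.fst heq
    have hsnd := congrArg Prod.snd heq
    have hwall : w y₁ = w y₂ := by
      funext j
      have := congrArg (fun g => (g j : ℤ)) hsnd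
      simp only [Φ] at this
      rw [hq] at this
      omega
    have hy1 : y₁ = B *ᵥ w y₁ + rep (Submodule.Quotient.mk y₁) := by
      rw [hw y₁]; ring
    have hy2 : y₂ = B *ᵥ w y₂ + rep (Submodule.Quotient.mk y₂) := by
      rw [hw y₂]; ring
    apply Subtype.ext
    show y₁ = y₂
    rw [hy1, hy2, hwall, hq]
  haveI hTfin : Finite T := by
    infer_instance
  have hPfin : Set.Finite {y : Fin m → ℤ | ∃ x : Fin n → ℝ, (∑ i, |x i|) ≤ γ ∧
        ∀ j, (y j : ℝ) = ∑ i, (A j i : ℝ) * x i} := by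
    rw [← Set.finite_coe_iff]
    exact Finite.of_injective Φ hΦinj
  constructor
  · rw [hP]; exact hPfin
  -- cardinality bound
  have hcard : Nat.card P ≤ Δ * ((K + 1).toNat) ^ m := by
    rw [hP]
    calc Nat.card {y : Fin m → ℤ | ∃ x : Fin n → ℝ, (∑ i, |x i|) ≤ γ ∧
          ∀ j, (y j : ℝ) = ∑ i, (A j i : ℝ) * x i}
        ≤ Nat.card T := Nat.card_le_card_of_injective Φ hΦinj
      _ = Δ * ((K + 1).toNat) ^ m := by
          rw [show (Nat.card T) = Nat.card ((Fin m → ℤ) ⧸ L) *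
              Nat.card (Fin m → (Finset.Icc (0:ℤ) K : Finset ℤ)) from Nat.card_prod _ _]
          rw [hQcard, Nat.card_pi]
          congr 1
          rw [Finset.prod_const]
          congr 1
          · rw [Nat.card_eq_fintype_card, Fintype.card_coe, Int.card_Icc]
            congr 1
            omega
          · simp
  have hKreal : (((K + 1).toNat : ℕ) : ℝ) ≤ 2 * γ + 1 := by
    have h1 : (((K + 1).toNat : ℕ) : ℝ) = ((K : ℝ) + 1) := by
      have : ((K + 1).toNat : ℤ) = K + 1 := Int.toNat_of_nonneg (by omega)
      exact_mod_cast congrArg (fun t : ℤ => (t : ℝ)) this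
    rw [h1]
    have := Int.floor_le (2 * γ)
    rw [← hKdef] at this
    linarith
  calc (Nat.card P : ℝ) ≤ ((Δ * ((K + 1).toNat) ^ m : ℕ) : ℝ) := by exact_mod_cast hcard
    _ = (Δ : ℝ) * (((K + 1).toNat : ℕ) : ℝ) ^ m := by push_cast; ring
    _ ≤ (Δ : ℝ) * (2 * γ + 1) ^ m := by
        refine mul_le_mul_of_nonneg_left ?_ (by positivity)
        exact pow_le_pow_left₀ (by positivity) hKreal m
    _ = (2 * γ + 1) ^ m * (Δ : ℝ) := mul_comm _ _
end

section
/- Unbounded case via Gomory (case m = 0 of the bounded proximity theorem): consider min{cᵀx : G x ≡ g (mod S), x ∈ ℤⁿ_{≥0}} with c ∈ ℤⁿ_{≥0}. If feasible, there exists an optimal solution z* with ‖z*‖₁ ≤ |det(S)| − 1. -/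
/-- unbounded case via Gomory, `m = 0`: for
`min{cᵀx : Gx ≡ g (mod S), x ∈ ℤⁿ_{≥0}}` with `c ≥ 0` and `S` nonsingular
diagonal (Smith Normal Form), if the problem is feasible then there exists an
optimal solution `z*` with `‖z*‖₁ ≤ |det S| − 1`. -/
theorem stmt17 (n : ℕ) (G S : Matrix (Fin n) (Fin n) ℤ)
    (hSdiag : ∀ i j : Fin n, i ≠ j → S i j = 0) (hS : S.det ≠ 0)
    (hSNF : ∀ i j : Fin n, i ≤ j → S i i ∣ S j j)
    (g : Fin n → ℤ) (c : Fin n → ℕ)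
    (hfeas : ∃ x : Fin n → ℕ, ∃ y : Fin n → ℤ,
      G.mulVec (fun i => (x i : ℤ)) - g = S.mulVec y) :
    ∃ z : Fin n → ℕ,
      (∃ y : Fin n → ℤ, G.mulVec (fun i => (z i : ℤ)) - g = S.mulVec y) ∧
      (∀ x : Fin n → ℕ,
        (∃ y : Fin n → ℤ, G.mulVec (fun i => (x i : ℤ)) - g = S.mulVec y) →
        ∑ i, c i * z i ≤ ∑ i, c i * x i) ∧
      ∑ i, z i ≤ S.det.natAbs - 1 := by
  classical
  set D := S.det.natAbs with hD
  -- S is a diagonal matrix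
  have hSdiag' : S = Matrix.diagonal (fun i => S i i) := by
    ext i j
    by_cases h : i = j
    · subst h; simp [Matrix.diagonal]
    · simp [Matrix.diagonal, h, hSdiag i j h]
  have hdet : S.det = ∏ i, S i i := by
    conv_lhs => rw [hSdiag']
    exact Matrix.det_diagonal
  have hSii : ∀ i, S i i ≠ 0 := by
    intro i hi
    exact hS (by rw [hdet]; exact Finset.prod_eq_zero (Finset.mem_univ i) hi)
  have hDpos : 0 < D := Int.natAbs_pos.mpr hS
  haveI : ∀ i : Fin n, NeZero ((S i i).natAbs) :=
    fun i => ⟨Int.natAbs_ne_zero.mpr (hSii i)⟩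
  have hcard : Fintype.card (∀ i : Fin n, ZMod ((S i i).natAbs)) = D := by
    rw [Fintype.card_pi]
    simp only [ZMod.card]
    rw [hD, hdet]
    exact (map_prod Int.natAbsHom _ _).symm
  -- abbreviations (no `set`, to keep contexts omega-friendly)
  obtain ⟨x0, hx0⟩ := hfeas
  -- a solution of minimal objective value
  obtain ⟨z1, hz1P, hmmin⟩ :
      ∃ z1 : Fin n → ℕ,
        (∃ y, G.mulVec (fun i => (z1 i : ℤ)) - g = S.mulVec y) ∧
        (∀ x : Fin n → ℕ,
          (∃ y, G.mulVec (fun i => (x i : ℤ)) - g = S.mulVec y) →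
          ∑ i, c i * z1 i ≤ ∑ i, c i * x i) := by
    have hTne : Set.Nonempty {v | ∃ x : Fin n → ℕ,
        (∃ y, G.mulVec (fun i => (x i : ℤ)) - g = S.mulVec y) ∧ ∑ i, c i * x i = v} :=
      ⟨∑ i, c i * x0 i, x0, hx0, rfl⟩
    obtain ⟨z1, hz1P, hz1obj⟩ := Nat.sInf_mem hTne
    exact ⟨z1, hz1P, fun x hx => by rw [hz1obj]; exact Nat.sInf_le ⟨x, hx, rfl⟩⟩
  -- among solutions of that optimal objective value, one of minimal ℓ¹ norm
  obtain ⟨z, ⟨hzP, hzobj⟩, hNmin⟩ :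
      ∃ z : Fin n → ℕ,
        ((∃ y, G.mulVec (fun i => (z i : ℤ)) - g = S.mulVec y) ∧
          ∑ i, c i * z i = ∑ i, c i * z1 i) ∧
        (∀ x : Fin n → ℕ,
          (∃ y, G.mulVec (fun i => (x i : ℤ)) - g = S.mulVec y) →
          ∑ i, c i * x i = ∑ i, c i * z1 i → ∑ i, z i ≤ ∑ i, x i) := by
    have hT2ne : Set.Nonempty {v | ∃ x : Fin n → ℕ,
        ((∃ y, G.mulVec (fun i => (x i : ℤ)) - g = S.mulVec y) ∧
          ∑ i, c i * x i = ∑ i, c i * z1 i) ∧ ∑ i, x i = v} :=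
      ⟨∑ i, z1 i, z1, ⟨hz1P, rfl⟩, rfl⟩
    obtain ⟨z, hzgood, hzsum⟩ := Nat.sInf_mem hT2ne
    exact ⟨z, hzgood, fun x hx he => by rw [hzsum]; exact Nat.sInf_le ⟨x, ⟨hx, he⟩, rfl⟩⟩
  refine ⟨z, hzP, fun x hx => by rw [hzobj]; exact hmmin x hx, ?_⟩
  -- remains: ∑ z ≤ D - 1
  by_contra hcon
  push_neg at hcon
  have hDN : D ≤ ∑ i, z i := by omega
  set Z := ∑ i, z i with hZ
  -- prefix sums
  set zsum : ℕ → ℕ :=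
    fun t => ∑ j ∈ Finset.univ.filter (fun j : Fin n => (j : ℕ) < t), z j with hzsdef
  have hzsmono : Monotone zsum := by
    intro a b hab
    apply Finset.sum_le_sum_of_subset
    intro j hj
    simp only [Finset.mem_filter, Finset.mem_univ, true_and] at hj ⊢
    omega
  have hzs0 : zsum 0 = 0 := by
    simp [hzsdef]
  have hzsn : zsum n = Z := by
    rw [hzsdef, hZ]
    apply Finset.sum_congr _ (fun _ _ => rfl)
    ext j
    simp [j.isLt]
  have hstep : ∀ i : Fin n, zsum ((i : ℕ) + 1) = zsum i + z i := by
    intro i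
    have hset : (Finset.univ.filter (fun j : Fin n => (j : ℕ) < (i : ℕ) + 1))
        = insert i (Finset.univ.filter (fun j : Fin n => (j : ℕ) < (i : ℕ))) := by
      ext j
      simp only [Finset.mem_filter, Finset.mem_univ, true_and, Finset.mem_insert, Fin.ext_iff]
      omega
    rw [hzsdef]
    simp only []
    rw [hset, Finset.sum_insert (by simp)]
    omega
  -- the prefix vectors
  set u : ℕ → Fin n → ℕ :=
    fun k i => min k (zsum ((i : ℕ) + 1)) - min k (zsum (i : ℕ)) with hudef
  have hule : ∀ k (i : Fin n), u k i ≤ z i := by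
    intro k i
    have := hstep i
    simp only [hudef]
    omega
  have humono : ∀ k l (i : Fin n), k ≤ l → u k i ≤ u l i := by
    intro k l i hkl
    have := hstep i
    simp only [hudef]
    omega
  have husum : ∀ k, ∑ i, u k i = min k Z := by
    intro k
    have hmono : Monotone (fun t => min k (zsum t)) :=
      fun a b hab => min_le_min le_rfl (hzsmono hab)
    calc ∑ i : Fin n, u k i
        = ∑ t ∈ Finset.range n, (min k (zsum (t + 1)) - min k (zsum t)) := by
          rw [← Fin.sum_univ_eq_sum_range (fun t => min k (zsum (t + 1)) - min k (zsum t)) n]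
      _ = min k (zsum n) - min k (zsum 0) := Finset.sum_range_tsub hmono n
      _ = min k Z := by rw [hzs0, hzsn]; omega
  -- the residue map for pigeonhole
  set ψ : Fin (D + 1) → (∀ i : Fin n, ZMod ((S i i).natAbs)) :=
    fun k i => ((G.mulVec (fun j => (u (k : ℕ) j : ℤ))) i : ZMod ((S i i).natAbs)) with hψdef
  have key : ∀ a b : Fin (D + 1), (a : ℕ) < (b : ℕ) → ψ a = ψ b → False := by
    intro a b hab hψab
    set ka := (a : ℕ) with hka
    set kb := (b : ℕ) with hkb
    have hkbD : kb ≤ D := by omega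
    have hkbZ : kb ≤ Z := le_trans hkbD hDN
    -- the cycle
    set d : Fin n → ℕ := fun i => u kb i - u ka i with hddef
    have hdle : ∀ i, d i ≤ z i := fun i => le_trans (Nat.sub_le _ _) (hule kb i)
    have hdadd : ∀ i, u ka i + d i = u kb i := by
      intro i
      have := humono ka kb i (le_of_lt hab)
      simp only [hddef]
      omega
    have hdsum : ka + ∑ i, d i = kb := by
      have h1 : ∑ i, (u ka i + d i) = ∑ i, u kb i :=
        Finset.sum_congr rfl (fun i _ => hdadd i)
      rw [Finset.sum_add_distrib, husum, husum] at h1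
      have hkaZ : ka ≤ Z := by omega
      rw [min_eq_left hkaZ, min_eq_left hkbZ] at h1
      exact h1
    have hdpos : 1 ≤ ∑ i, d i := by omega
    -- cast fact
    have hdcast : (fun j => (d j : ℤ))
        = (fun j => (u kb j : ℤ)) - (fun j => (u ka j : ℤ)) := by
      funext j
      have := hdadd j
      simp only [Pi.sub_apply]
      omega
    -- divisibility
    have hdvd : ∀ i, S i i ∣ (G.mulVec (fun j => (d j : ℤ))) i := by
      intro i
      have h1 : ((G.mulVec (fun j => (u ka j : ℤ))) i : ZMod ((S i i).natAbs))
          = ((G.mulVec (fun j => (u kb j : ℤ))) i : ZMod ((S i i).natAbs)) :=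
        congrFun hψab i
      have h2 : ((S i i).natAbs : ℤ) ∣
          (G.mulVec (fun j => (u kb j : ℤ))) i - (G.mulVec (fun j => (u ka j : ℤ))) i :=
        Int.ModEq.dvd ((ZMod.intCast_eq_intCast_iff _ _ _).mp h1)
      rw [hdcast, Matrix.mulVec_sub]
      exact Int.natAbs_dvd.mp h2
    -- the integer vector w with S w = G d
    set w : Fin n → ℤ := fun i => (G.mulVec (fun j => (d j : ℤ))) i / S i i with hwdef
    have hSw : S.mulVec w = G.mulVec (fun j => (d j : ℤ)) := by
      funext i
      conv_lhs => rw [hSdiag']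
      rw [Matrix.mulVec_diagonal]
      exact Int.mul_ediv_cancel' (hdvd i)
    -- the new solution
    set z' : Fin n → ℕ := fun i => z i - d i with hz'def
    have hz'cast : (fun i => (z' i : ℤ))
        = (fun i => (z i : ℤ)) - (fun i => (d i : ℤ)) := by
      funext i
      have := hdle i
      simp only [hz'def, Pi.sub_apply]
      omega
    obtain ⟨y, hy⟩ := hzP
    have hz'P : ∃ y', G.mulVec (fun i => (z' i : ℤ)) - g = S.mulVec y' := by
      refine ⟨y - w, ?_⟩
      rw [hz'cast, Matrix.mulVec_sub, Matrix.mulVec_sub, hSw]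
      rw [show G.mulVec (fun i => (z i : ℤ)) - G.mulVec (fun j => (d j : ℤ)) - g
          = (G.mulVec (fun i => (z i : ℤ)) - g) - G.mulVec (fun j => (d j : ℤ)) by ring]
      rw [hy]
    have hz'obj : ∑ i, c i * z' i = ∑ i, c i * z1 i := by
      refine le_antisymm ?_ (hmmin z' hz'P)
      rw [← hzobj]
      apply Finset.sum_le_sum
      intro i _
      exact Nat.mul_le_mul_left _ (Nat.sub_le _ _)
    have hz'sum : ∑ i, z' i + ∑ i, d i = Z := by
      have h1 : ∑ i, (z' i + d i) = ∑ i, z i := by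
        apply Finset.sum_congr rfl
        intro i _
        have := hdle i
        simp only [hz'def]
        omega
      rw [Finset.sum_add_distrib] at h1
      rw [h1, hZ]
    have hcontr := hNmin z' hz'P hz'obj
    omega
  obtain ⟨a, b, hab, hψab⟩ := Fintype.exists_ne_map_eq_of_card_lt ψ (by rw [hcard]; simp)
  rcases lt_or_gt_of_ne (fun h => hab (by exact_mod_cast Fin.ext h) : (a : ℕ) ≠ (b : ℕ)) with h | h
  · exact key a b h hψab
  · exact key b a h hψab.symm
end
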